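/- arXiv:2303.06726 — 5 statements merged into one kernel-verified Lean document; each statement's English description precedes it below -/
import Mathlib

section
/- Let σ : ℝ → ℝ be bounded and differentiable with σ(0) = 0 and σ′(0) ≠ 0, and assume its derivative σ′ is K-bounded and K-Lipschitz for some K > 0. Let Φ ⊆ L²(μ) ∩ L^∞(μ) be star-shaped at 0, with every φ ∈ Φ essentially bounded. If the linear span of Φ is dense in L²(μ), then the linear span of {σ ∘ φ : φ ∈ Φ} is dense in L²(μ). -/
open MeasureTheory

/-- Pointwise quadratic error bound from the Lipschitz derivative. -/
lemma sigma_quad_bound (σ : ℝ → ℝ) (K : ℝ) (hK : 0 < K)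
    (hσdiff : Differentiable ℝ σ) (hσ0 : σ 0 = 0)
    (hσ'lip : LipschitzWith (Real.toNNReal K) (deriv σ)) (u : ℝ) :
    |σ u - deriv σ 0 * u| ≤ K * u ^ 2 := by
  set c := deriv σ 0
  set F : ℝ → ℝ := fun x => σ x - c * x with hF
  have hFd : ∀ x : ℝ, HasDerivAt F (deriv σ x - c) x := fun x =>
    ((hσdiff x).hasDerivAt).sub ((hasDerivAt_id x).const_mul c |>.congr_deriv (by ring))
  have hFderiv : ∀ x : ℝ, deriv F x = deriv σ x - c := fun x => (hFd x).deriv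
  have hlip : ∀ x : ℝ, |deriv σ x - c| ≤ K * |x| := by
    intro x
    have := hσ'lip.dist_le_mul x 0
    simpa [Real.dist_eq, Real.coe_toNNReal K hK.le, c] using this
  have hconv : Convex ℝ (Set.Icc (-|u|) (|u|)) := convex_Icc _ _
  have hbound : ∀ x ∈ Set.Icc (-|u|) (|u|), ‖deriv F x‖ ≤ K * |u| := by
    intro x hx
    have hxu : |x| ≤ |u| := abs_le.2 ⟨hx.1, hx.2⟩
    calc ‖deriv F x‖ = |deriv σ x - c| := by rw [hFderiv]; rfl
      _ ≤ K * |x| := hlip x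
      _ ≤ K * |u| := by nlinarith
  have hdiff : ∀ x ∈ Set.Icc (-|u|) (|u|), DifferentiableAt ℝ F x := fun x _ =>
    (hFd x).differentiableAt
  have h0 : (0 : ℝ) ∈ Set.Icc (-|u|) (|u|) := ⟨neg_nonpos.2 (abs_nonneg u), abs_nonneg u⟩
  have hu : u ∈ Set.Icc (-|u|) (|u|) := ⟨neg_abs_le u, le_abs_self u⟩
  have := hconv.norm_image_sub_le_of_norm_deriv_le hdiff hbound h0 hu
  have hF0 : F 0 = 0 := by simp [hF, hσ0]
  have hFu : F u = σ u - c * u := rfl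
  rw [hF0, hFu, sub_zero, sub_zero] at this
  calc |σ u - c * u| ≤ K * |u| * ‖u‖ := this
    _ = K * u ^ 2 := by rw [Real.norm_eq_abs, ← sq_abs u]; ring

set_option maxHeartbeats 1000000 in
/-- Let `σ : ℝ → ℝ` be bounded and differentiable with `σ 0 = 0` and
`deriv σ 0 ≠ 0`, whose derivative is `K`-bounded and `K`-Lipschitz. Let `Φ ⊆ L²(μ) ∩ L^∞(μ)`
be star-shaped at `0`, with every `φ ∈ Φ` essentially bounded. If the linear span of `Φ` is
dense in `L²(μ)`, then so is the linear span of `{σ ∘ φ : φ ∈ Φ}`. -/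
theorem statement0
    (d' : ℕ) (μ : Measure (EuclideanSpace ℝ (Fin d'))) [IsProbabilityMeasure μ]
    (σ : ℝ → ℝ) (K : ℝ) (hK : 0 < K)
    (hσbdd : ∃ M : ℝ, ∀ x : ℝ, |σ x| ≤ M)
    (hσdiff : Differentiable ℝ σ)
    (hσ0 : σ 0 = 0) (hσ'0 : deriv σ 0 ≠ 0)
    (hσ'bdd : ∀ x : ℝ, |deriv σ x| ≤ K)
    (hσ'lip : LipschitzWith (Real.toNNReal K) (deriv σ))
    (Φ : Set (Lp ℝ 2 μ))
    (hΦesbdd : ∀ φ ∈ Φ, MemLp (φ : EuclideanSpace ℝ (Fin d') → ℝ) ⊤ μ)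
    (hΦstar : ∀ φ ∈ Φ, ∀ c : ℝ, 0 ≤ c → c ≤ 1 → c • φ ∈ Φ)
    (hdense : Dense ((Submodule.span ℝ Φ : Submodule ℝ (Lp ℝ 2 μ)) : Set (Lp ℝ 2 μ))) :
    Dense ((Submodule.span ℝ
        {g : Lp ℝ 2 μ | ∃ φ ∈ Φ,
          (g : EuclideanSpace ℝ (Fin d') → ℝ) =ᵐ[μ] fun x => σ (φ x)} :
        Submodule ℝ (Lp ℝ 2 μ)) : Set (Lp ℝ 2 μ)) := by
  obtain ⟨M, hM⟩ := hσbdd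
  set G : Set (Lp ℝ 2 μ) := {g : Lp ℝ 2 μ | ∃ φ ∈ Φ,
    (g : EuclideanSpace ℝ (Fin d') → ℝ) =ᵐ[μ] fun x => σ (φ x)} with hGdef
  set T : Submodule ℝ (Lp ℝ 2 μ) := Submodule.span ℝ G with hTdef
  have hmem : ∀ φ ∈ Φ, φ ∈ T.topologicalClosure := by
    intro φ hφ
    -- essential bound for φ
    have hφtop := hΦesbdd φ hφ
    have hEfin : eLpNormEssSup (φ : EuclideanSpace ℝ (Fin d') → ℝ) μ ≠ ⊤ := by
      have h2 := hφtop.2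
      rw [eLpNorm_exponent_top] at h2
      exact h2.ne
    set C : ℝ := (eLpNormEssSup (φ : EuclideanSpace ℝ (Fin d') → ℝ) μ).toReal with hCdef
    have hC0 : 0 ≤ C := ENNReal.toReal_nonneg
    have hb : ∀ᵐ x ∂μ, (‖(φ : EuclideanSpace ℝ (Fin d') → ℝ) x‖₊ : ENNReal)
        ≤ eLpNormEssSup (φ : EuclideanSpace ℝ (Fin d') → ℝ) μ := ae_le_eLpNormEssSup
    have hφC : ∀ᵐ x ∂μ, |(φ : EuclideanSpace ℝ (Fin d') → ℝ) x| ≤ C := by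
      filter_upwards [hb] with x hx
      have h3 : ((‖(φ : EuclideanSpace ℝ (Fin d') → ℝ) x‖₊ : ENNReal)).toReal ≤ C :=
        ENNReal.toReal_mono hEfin hx
      simpa [Real.norm_eq_abs] using h3
    -- the approximating sequence
    set c : ℕ → ℝ := fun n => 1 / (n + 1) with hcdef
    have hc0 : ∀ n, 0 < c n := fun n => by positivity
    have hc1 : ∀ n, c n ≤ 1 := fun n => by
      rw [hcdef]
      rw [div_le_one (by positivity)]
      linarith [Nat.cast_nonneg (α := ℝ) n]
    have hφn : ∀ n, c n • φ ∈ Φ := fun n => hΦstar φ hφ (c n) (hc0 n).le (hc1 n)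
    have hfmem : ∀ n, MemLp (fun x => σ (((c n • φ : Lp ℝ 2 μ) :
        EuclideanSpace ℝ (Fin d') → ℝ) x)) 2 μ := by
      intro n
      refine MemLp.of_bound
        (hσdiff.continuous.comp_aestronglyMeasurable (Lp.aestronglyMeasurable _)) M ?_
      exact Filter.Eventually.of_forall fun x => by simpa [Real.norm_eq_abs] using hM _
    set g : ℕ → Lp ℝ 2 μ := fun n => (hfmem n).toLp _ with hgdef
    have hgG : ∀ n, g n ∈ G := fun n => ⟨c n • φ, hφn n, (hfmem n).coeFn_toLp⟩
    have hhT : ∀ n, (c n)⁻¹ • g n ∈ T :=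
      fun n => T.smul_mem _ (Submodule.subset_span (hgG n))
    -- norm bound
    have hnorm : ∀ n, ‖(c n)⁻¹ • g n - deriv σ 0 • φ‖ ≤ K * C ^ 2 * c n := by
      intro n
      have hae : ∀ᵐ x ∂μ, ‖(((c n)⁻¹ • g n - deriv σ 0 • φ : Lp ℝ 2 μ) :
          EuclideanSpace ℝ (Fin d') → ℝ) x‖ ≤ K * C ^ 2 * c n := by
        filter_upwards [hφC, Lp.coeFn_sub ((c n)⁻¹ • g n) (deriv σ 0 • φ),
          Lp.coeFn_smul ((c n)⁻¹) (g n), Lp.coeFn_smul (deriv σ 0) φ,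
          (hfmem n).coeFn_toLp, Lp.coeFn_smul (c n) φ] with x hx h1 h2 h3 h4 h5
        have hval : (((c n)⁻¹ • g n - deriv σ 0 • φ : Lp ℝ 2 μ) :
            EuclideanSpace ℝ (Fin d') → ℝ) x
            = (c n)⁻¹ * σ (c n * (φ : EuclideanSpace ℝ (Fin d') → ℝ) x)
              - deriv σ 0 * (φ : EuclideanSpace ℝ (Fin d') → ℝ) x := by
          rw [h1]
          simp only [Pi.sub_apply]
          rw [h2, h3]
          simp only [Pi.smul_apply, smul_eq_mul]
          rw [h4]
          congr 2
          rw [h5]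
          simp [smul_eq_mul]
        rw [hval, Real.norm_eq_abs]
        set t := (φ : EuclideanSpace ℝ (Fin d') → ℝ) x with htdef
        have hq := sigma_quad_bound σ K hK hσdiff hσ0 hσ'lip (c n * t)
        have hne : c n ≠ 0 := (hc0 n).ne'
        have hrw : (c n)⁻¹ * σ (c n * t) - deriv σ 0 * t
            = (c n)⁻¹ * (σ (c n * t) - deriv σ 0 * (c n * t)) := by
          field_simp
        rw [hrw, abs_mul, abs_inv, abs_of_pos (hc0 n)]
        have : (c n)⁻¹ * |σ (c n * t) - deriv σ 0 * (c n * t)|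
            ≤ (c n)⁻¹ * (K * (c n * t) ^ 2) := by
          apply mul_le_mul_of_nonneg_left hq (by positivity)
        refine this.trans ?_
        have ht2 : t ^ 2 ≤ C ^ 2 := by nlinarith [abs_nonneg t, sq_abs t, hx]
        have : (c n)⁻¹ * (K * (c n * t) ^ 2) = K * t ^ 2 * c n := by
          field_simp
        rw [this]
        have hcn := (hc0 n).le
        nlinarith [mul_nonneg (mul_nonneg hK.le (sub_nonneg.2 ht2)) hcn]
      have hle := Lp.norm_le_of_ae_bound (f := (c n)⁻¹ • g n - deriv σ 0 • φ)
        (C := K * C ^ 2 * c n) (by positivity) hae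
      have huniv : measureUnivNNReal μ = 1 := by
        rw [measureUnivNNReal, measure_univ]; rfl
      rw [huniv, NNReal.coe_one, Real.one_rpow, one_mul] at hle
      exact hle
    -- convergence
    have hcz : Filter.Tendsto c Filter.atTop (nhds 0) := by
      rw [hcdef]; exact tendsto_one_div_add_atTop_nhds_zero_nat
    have htend0 : Filter.Tendsto (fun n : ℕ => K * C ^ 2 * c n) Filter.atTop (nhds 0) := by
      have h := hcz.const_mul (K * C ^ 2)
      rw [mul_zero] at h
      exact h
    have htend : Filter.Tendsto (fun n => (c n)⁻¹ • g n) Filter.atTop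
        (nhds (deriv σ 0 • φ)) := by
      rw [tendsto_iff_norm_sub_tendsto_zero]
      exact squeeze_zero (fun n => norm_nonneg _) hnorm htend0
    have hclos : deriv σ 0 • φ ∈ closure (T : Set (Lp ℝ 2 μ)) :=
      mem_closure_of_tendsto htend (Filter.Eventually.of_forall hhT)
    have hsm : deriv σ 0 • φ ∈ T.topologicalClosure := hclos
    have := T.topologicalClosure.smul_mem (deriv σ 0)⁻¹ hsm
    rwa [inv_smul_smul₀ hσ'0] at this
  have hspanle : Submodule.span ℝ Φ ≤ T.topologicalClosure :=
    Submodule.span_le.2 hmem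
  rw [dense_iff_closure_eq] at hdense ⊢
  have h1 : closure ((Submodule.span ℝ Φ : Submodule ℝ (Lp ℝ 2 μ)) : Set (Lp ℝ 2 μ))
      ⊆ closure (T : Set (Lp ℝ 2 μ)) := by
    apply closure_minimal _ isClosed_closure
    exact fun x hx => hspanle hx
  rw [hdense] at h1
  exact Set.eq_univ_of_univ_subset h1
end

section
/- Let σ : ℝ → ℝ be measurable with |σ| ≤ K for some K > 0, let h : Θ × ℝ^d → ℝ be jointly measurable, and fix R > 0. Assume the family {σ(h(θ,·))}_{θ} is total in the almost-everywhere sense: every g ∈ L²(μ) satisfying ∫ g(x) σ(h(θ,x)) dμ(x) = 0 for P-almost every θ vanishes μ-almost everywhere. Then the linear span of the set of functions { x ↦ ∫_Θ f(θ) σ(h(θ,x)) dP(θ) : f ∈ L_R^∞(P) } is dense in L²(μ). -/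
open MeasureTheory

/-- If the family `{σ(h(θ,·))}_θ` is total in the a.e. sense (every
`g ∈ L²(μ)` orthogonal to `σ(h(θ,·))` for `P`-a.e. `θ` vanishes `μ`-a.e.), then the linear
span of `{x ↦ ∫ f(θ) σ(h(θ,x)) dP(θ) : f ∈ L_R^∞(P)}` is dense in `L²(μ)`. -/
theorem statement1
    (Θ : Type*) [MeasurableSpace Θ] (P : Measure Θ) [IsProbabilityMeasure P]
    (d : ℕ) (μ : Measure (EuclideanSpace ℝ (Fin d))) [IsProbabilityMeasure μ]
    (σ : ℝ → ℝ) (hσmeas : Measurable σ)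
    (K : ℝ) (hK : 0 < K) (hσbdd : ∀ x : ℝ, |σ x| ≤ K)
    (h : Θ × EuclideanSpace ℝ (Fin d) → ℝ) (hmeas : Measurable h)
    (R : ℝ) (hR : 0 < R)
    (htotal : ∀ g : EuclideanSpace ℝ (Fin d) → ℝ, MemLp g 2 μ →
      (∀ᵐ θ ∂P, ∫ x, g x * σ (h (θ, x)) ∂μ = 0) → g =ᵐ[μ] 0) :
    Dense ((Submodule.span ℝ
        {F : Lp ℝ 2 μ | ∃ f : Θ → ℝ, Measurable f ∧ (∀ θ, |f θ| ≤ R) ∧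
          (F : EuclideanSpace ℝ (Fin d) → ℝ) =ᵐ[μ]
            fun x => ∫ θ, f θ * σ (h (θ, x)) ∂P} :
        Submodule ℝ (Lp ℝ 2 μ)) : Set (Lp ℝ 2 μ)) := by
  set S : Set (Lp ℝ 2 μ) :=
    {F : Lp ℝ 2 μ | ∃ f : Θ → ℝ, Measurable f ∧ (∀ θ, |f θ| ≤ R) ∧
      (F : EuclideanSpace ℝ (Fin d) → ℝ) =ᵐ[μ]
        fun x => ∫ θ, f θ * σ (h (θ, x)) ∂P} with hS
  rw [Submodule.dense_iff_topologicalClosure_eq_top, Submodule.topologicalClosure_eq_top_iff,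
    Submodule.eq_bot_iff]
  intro g hg
  have hgm : AEStronglyMeasurable (g : EuclideanSpace ℝ (Fin d) → ℝ) μ :=
    Lp.aestronglyMeasurable g
  have hgint : Integrable (g : EuclideanSpace ℝ (Fin d) → ℝ) μ :=
    (Lp.memLp g).integrable one_le_two
  set T : Θ → ℝ := fun θ => ∫ x, (g : EuclideanSpace ℝ (Fin d) → ℝ) x * σ (h (θ, x)) ∂μ with hT
  -- key: for every bounded measurable f, ∫ f θ * T θ = 0
  have key : ∀ f : Θ → ℝ, Measurable f → (∀ θ, |f θ| ≤ R) →
      ∫ θ, f θ * T θ ∂P = 0 := by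
    intro f hf hfb
    -- the candidate function
    set Ff : EuclideanSpace ℝ (Fin d) → ℝ := fun x => ∫ θ, f θ * σ (h (θ, x)) ∂P with hFf
    have hmeasF : StronglyMeasurable Ff := by
      apply StronglyMeasurable.integral_prod_left'
        (f := fun z : Θ × EuclideanSpace ℝ (Fin d) => f z.1 * σ (h z))
      exact ((hf.comp measurable_fst).mul (hσmeas.comp hmeas)).stronglyMeasurable
    have hFbdd : ∀ x, ‖Ff x‖ ≤ R * K := by
      intro x
      calc ‖Ff x‖ ≤ ∫ θ, ‖f θ * σ (h (θ, x))‖ ∂P := norm_integral_le_integral_norm _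
        _ ≤ ∫ _θ, R * K ∂P := by
            apply integral_mono_of_nonneg (Filter.Eventually.of_forall fun θ => norm_nonneg _)
              (integrable_const _)
            refine Filter.Eventually.of_forall fun θ => ?_
            show ‖f θ * σ (h (θ, x))‖ ≤ R * K
            rw [norm_mul, Real.norm_eq_abs, Real.norm_eq_abs]
            exact mul_le_mul (hfb θ) (hσbdd _) (abs_nonneg _) (le_of_lt hR)
        _ = R * K := by simp
    have hFmem : MemLp Ff 2 μ :=
      MemLp.of_bound hmeasF.aestronglyMeasurable (R * K)
        (Filter.Eventually.of_forall hFbdd)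
    have hFS : hFmem.toLp Ff ∈ S := ⟨f, hf, hfb, hFmem.coeFn_toLp⟩
    have hortho : @inner ℝ _ _ (hFmem.toLp Ff) g = 0 :=
      (Submodule.mem_orthogonal _ g).mp hg _ (Submodule.subset_span hFS)
    -- inner product as integral
    have hinner : @inner ℝ _ _ (hFmem.toLp Ff) g = ∫ x, Ff x * (g : _ → ℝ) x ∂μ := by
      rw [L2.inner_def]
      apply integral_congr_ae
      filter_upwards [hFmem.coeFn_toLp] with x hx
      rw [hx]
      simp [RCLike.inner_apply, mul_comm]
    -- Fubini
    have hGint : Integrable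
        (Function.uncurry fun (θ : Θ) (x : EuclideanSpace ℝ (Fin d)) =>
          f θ * σ (h (θ, x)) * (g : _ → ℝ) x) (P.prod μ) := by
      apply Integrable.mono'
        ((integrable_const (R * K)).mul_prod hgint.abs)
      · exact (((hf.comp measurable_fst).mul (hσmeas.comp hmeas)).aestronglyMeasurable.mul
          hgm.comp_snd)
      · refine Filter.Eventually.of_forall fun z => ?_
        simp only [Function.uncurry]
        show ‖f z.1 * σ (h z) * (g : _ → ℝ) z.2‖ ≤ R * K * |(g : _ → ℝ) z.2|
        rw [norm_mul, norm_mul, Real.norm_eq_abs, Real.norm_eq_abs, Real.norm_eq_abs]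
        have h1 : |f z.1| * |σ (h z)| ≤ R * K :=
          mul_le_mul (hfb z.1) (hσbdd _) (abs_nonneg _) (le_of_lt hR)
        exact mul_le_mul_of_nonneg_right h1 (abs_nonneg _)
    have hswap := integral_integral_swap hGint
    -- LHS of swap equals ∫ f θ * T θ
    have hL : (∫ θ, ∫ x, f θ * σ (h (θ, x)) * (g : _ → ℝ) x ∂μ ∂P) = ∫ θ, f θ * T θ ∂P := by
      apply integral_congr_ae
      refine Filter.Eventually.of_forall fun θ => ?_
      show (∫ x, f θ * σ (h (θ, x)) * (g : _ → ℝ) x ∂μ) = f θ * T θ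
      simp only [hT]
      rw [← integral_const_mul]
      congr 1
      funext x
      ring
    -- RHS of swap equals the inner product integral
    have hRr : (∫ x, ∫ θ, f θ * σ (h (θ, x)) * (g : _ → ℝ) x ∂P ∂μ)
        = ∫ x, Ff x * (g : _ → ℝ) x ∂μ := by
      apply integral_congr_ae
      refine Filter.Eventually.of_forall fun x => ?_
      show (∫ θ, f θ * σ (h (θ, x)) * (g : _ → ℝ) x ∂P) = Ff x * (g : _ → ℝ) x
      simp only [hFf]
      rw [← integral_mul_const]
    rw [← hL, hswap, hRr, ← hinner, hortho]
  -- T is a.e. strongly measurable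
  have hTm : AEStronglyMeasurable T P := by
    apply AEStronglyMeasurable.integral_prod_right'
      (f := fun z : Θ × EuclideanSpace ℝ (Fin d) => (g : _ → ℝ) z.2 * σ (h z))
    exact hgm.comp_snd.mul (hσmeas.comp hmeas).aestronglyMeasurable
  set T' := hTm.mk T with hT'
  have hTT' : T =ᵐ[P] T' := hTm.ae_eq_mk
  have hT'm : Measurable T' := hTm.stronglyMeasurable_mk.measurable
  -- T integrable
  have hTint : Integrable T P := by
    apply Integrable.mono' (integrable_const (K * ∫ x, |(g : _ → ℝ) x| ∂μ)) hTm
    refine Filter.Eventually.of_forall fun θ => ?_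
    calc ‖T θ‖ ≤ ∫ x, ‖(g : _ → ℝ) x * σ (h (θ, x))‖ ∂μ := norm_integral_le_integral_norm _
      _ ≤ ∫ x, K * |(g : _ → ℝ) x| ∂μ := by
          apply integral_mono_of_nonneg (Filter.Eventually.of_forall fun x => norm_nonneg _)
            (hgint.abs.const_mul K)
          refine Filter.Eventually.of_forall fun x => ?_
          show ‖(g : _ → ℝ) x * σ (h (θ, x))‖ ≤ K * |(g : _ → ℝ) x|
          rw [norm_mul, Real.norm_eq_abs, Real.norm_eq_abs, mul_comm]
          exact mul_le_mul (hσbdd _) (le_refl _) (abs_nonneg _) (le_of_lt hK)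
      _ = K * ∫ x, |(g : _ → ℝ) x| ∂μ := integral_const_mul K _
  have hT'int : Integrable T' P := hTint.congr hTT'
  -- choose the sign function
  set f₀ : Θ → ℝ := fun θ => if 0 ≤ T' θ then R else -R with hf₀
  have hf₀m : Measurable f₀ :=
    Measurable.ite (measurableSet_le measurable_const hT'm) measurable_const measurable_const
  have hf₀b : ∀ θ, |f₀ θ| ≤ R := by
    intro θ
    by_cases hc : 0 ≤ T' θ <;> simp [hf₀, hc, abs_of_pos hR, le_of_lt hR]
  have hkey := key f₀ hf₀m hf₀b
  have h0 : ∫ θ, R * |T' θ| ∂P = 0 := by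
    rw [← hkey]
    apply integral_congr_ae
    filter_upwards [hTT'] with θ hθ
    symm
    show f₀ θ * T θ = R * |T' θ|
    rw [hθ]
    simp only [hf₀]
    by_cases hc : 0 ≤ T' θ
    · rw [if_pos hc, abs_of_nonneg hc]
    · push_neg at hc
      rw [if_neg hc.not_ge, abs_of_neg hc]
      ring
  have hTabs : ∫ θ, |T' θ| ∂P = 0 := by
    have := h0
    rw [integral_const_mul] at this
    exact (mul_eq_zero.mp this).resolve_left (ne_of_gt hR)
  have hT'0 : T' =ᵐ[P] 0 := by
    have habs : (fun θ => |T' θ|) =ᵐ[P] 0 :=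
      (integral_eq_zero_iff_of_nonneg_ae
        (Filter.Eventually.of_forall fun θ => abs_nonneg _) hT'int.abs).mp hTabs
    filter_upwards [habs] with θ hθ
    simpa using abs_eq_zero.mp hθ
  have hT0 : ∀ᵐ θ ∂P, T θ = 0 := by
    filter_upwards [hTT', hT'0] with θ h1 h2
    rw [h1, h2]
    rfl
  have hg0 : (g : EuclideanSpace ℝ (Fin d) → ℝ) =ᵐ[μ] 0 :=
    htotal _ (Lp.memLp g) hT0
  exact (Lp.eq_zero_iff_ae_eq_zero (f := g)).mpr hg0
end

section
/- Assume: (a) σ is bounded by K, K-Lipschitz, differentiable with σ(0) = 0 and σ′(0) ≠ 0, and its derivative is K-bounded and K-Lipschitz; (b) universal approximation: every g ∈ L²(ν₀) with ∫ g(x) σ(u·x) dν₀(x) = 0 for all u ∈ ℝ^d vanishes ν₀-almost everywhere; (c) diversity: for every u₁ ∈ ℝ^d, every u₂, u₃ ∈ L_R^∞(P), and every ε > 0, one has P({θ : ‖w(θ) − u₁‖ < ε, ‖W(·,θ) − u₂‖_{L²(P)} < ε, and ‖W(θ,·) − u₃‖_{L²(P)} < ε}) > 0. Then every g ∈ L²(ν₀)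 satisfying ∫ g(y) G(θ; y, 0) dν₀(y) = 0 for P-almost every θ vanishes ν₀-almost everywhere; equivalently, for every measurable S ⊆ Θ with P(S) = 1, the linear span of {G(θ; ·, 0) : θ ∈ S} is dense in L²(ν₀). -/
open MeasureTheory Filter Topology

/-- The unrolled recurrent-network features, parameterized by the number `j` of remaining
unrolling steps: `Gnet P T σ w W j` corresponds to `G(·; ·, L − j)` of the paper, i.e.
`Gnet ... 0 θ y = σ(w(θ)·y)` (level `k = L`) and
`Gnet ... (j+1) θ y = σ(∫ W(θ,θ') Gnet ... j θ' y dP(θ') + w(θ)·T^[j+1](y))`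
(level `k = L − (j+1)`, where `T^{L−k} = T^[j+1]`). -/
noncomputable def Gnet {Θ : Type*} [MeasurableSpace Θ] (P : Measure Θ) {d : ℕ}
    (T : EuclideanSpace ℝ (Fin d) → EuclideanSpace ℝ (Fin d))
    (σ : ℝ → ℝ) (w : Θ → EuclideanSpace ℝ (Fin d)) (W : Θ → Θ → ℝ) :
    ℕ → Θ → EuclideanSpace ℝ (Fin d) → ℝ
  | 0, θ, y => σ (inner ℝ (w θ) y)
  | (j + 1), θ, y =>
      σ ((∫ θ', W θ θ' * Gnet P T σ w W j θ' y ∂P) + inner ℝ (w θ) (T^[j + 1] y))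

section Aux

variable {Θ : Type*} [MeasurableSpace Θ] {P : Measure Θ} {d : ℕ}
  {T : EuclideanSpace ℝ (Fin d) → EuclideanSpace ℝ (Fin d)}
  {σ : ℝ → ℝ} {w : Θ → EuclideanSpace ℝ (Fin d)} {W : Θ → Θ → ℝ} {K : ℝ}

lemma Gnet_abs_le (hσ : ∀ x, |σ x| ≤ K) (j : ℕ) (θ : Θ) (y : EuclideanSpace ℝ (Fin d)) :
    |Gnet P T σ w W j θ y| ≤ K := by
  cases j <;> simp only [Gnet] <;> exact hσ _

lemma measurable_Gnet [SFinite P] (hσc : Continuous σ) (hT : Measurable T)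
    (hw : Measurable w) (hW : Measurable (Function.uncurry W)) (j : ℕ) :
    Measurable (fun p : Θ × EuclideanSpace ℝ (Fin d) => Gnet P T σ w W j p.1 p.2) := by
  induction j with
  | zero =>
      simp only [Gnet]
      exact hσc.measurable.comp ((hw.comp measurable_fst).inner measurable_snd)
  | succ j ih =>
      simp only [Gnet]
      apply hσc.measurable.comp
      apply Measurable.add
      · have hint : Measurable (fun q : (Θ × EuclideanSpace ℝ (Fin d)) × Θ =>
            W q.1.1 q.2 * Gnet P T σ w W j q.2 q.1.2) := by
          apply Measurable.mul
          · exact hW.comp (measurable_fst.fst.prodMk measurable_snd)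
          · exact ih.comp (measurable_snd.prodMk measurable_fst.snd)
        exact hint.stronglyMeasurable.integral_prod_right'.measurable
      · exact (hw.comp measurable_fst).inner ((hT.iterate (j+1)).comp measurable_snd)

lemma integral_abs_le_sqrt_integral_sq {Θ : Type*} [MeasurableSpace Θ] (P : Measure Θ)
    [IsProbabilityMeasure P] {f : Θ → ℝ} (hf : MemLp f 2 P) :
    ∫ θ, |f θ| ∂P ≤ Real.sqrt (∫ θ, (f θ) ^ 2 ∂P) := by
  have habs : MemLp (fun θ => |f θ|) 2 P := by
    simpa [Real.norm_eq_abs] using hf.norm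
  have h := ProbabilityTheory.variance_nonneg (fun θ => |f θ|) P
  rw [ProbabilityTheory.variance_eq_sub habs] at h
  have hsq : (∫ θ, |f θ| ∂P) ^ 2 ≤ ∫ θ, (f θ) ^ 2 ∂P := by
    have heq : ∫ x, ((fun θ => |f θ|) ^ 2) x ∂P = ∫ θ, (f θ) ^ 2 ∂P := by
      apply integral_congr_ae; filter_upwards with θ; simp [sq_abs]
    rw [heq] at h; linarith
  have h0 : 0 ≤ ∫ θ, |f θ| ∂P := integral_nonneg fun θ => abs_nonneg _
  have h1 : 0 ≤ ∫ θ, (f θ) ^ 2 ∂P := integral_nonneg fun θ => sq_nonneg _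
  exact (Real.le_sqrt h0 h1).mpr hsq

lemma integrable_comp_fst' {α β : Type*} [MeasurableSpace α] [MeasurableSpace β]
    {μ : Measure α} (ν : Measure β) [SFinite μ] [IsProbabilityMeasure ν] {f : α → ℝ}
    (hf : Integrable f μ) : Integrable (fun p : α × β => f p.1) (μ.prod ν) := by
  have h1 : Integrable f (Measure.map Prod.fst (μ.prod ν)) := by
    simpa [Measure.map_fst_prod] using hf
  exact (integrable_map_measure (by simpa [Measure.map_fst_prod] using hf.aestronglyMeasurable)
    measurable_fst.aemeasurable).mp h1

end Aux

/-- Under regularity of `σ`, universal approximation for single neurons, and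
diversity of the weights, every `g ∈ L²(ν₀)` orthogonal to the level-0 features
`G(θ; ·, 0)` for `P`-a.e. `θ` vanishes `ν₀`-a.e. -/
theorem statement2
    (Θ : Type*) [MeasurableSpace Θ] (P : Measure Θ) [IsProbabilityMeasure P]
    (d : ℕ) (T : EuclideanSpace ℝ (Fin d) → EuclideanSpace ℝ (Fin d)) (hT : Measurable T)
    (ν₀ : Measure (EuclideanSpace ℝ (Fin d))) [IsProbabilityMeasure ν₀]
    (hmom : Integrable (fun y => ‖y‖ ^ 2) ν₀)
    (L : ℕ) (R K : ℝ) (hR : 0 < R) (hRK : R ≤ K)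
    (σ : ℝ → ℝ)
    (hσbdd : ∀ x : ℝ, |σ x| ≤ K) (hσlip : LipschitzWith (Real.toNNReal K) σ)
    (hσdiff : Differentiable ℝ σ) (hσ0 : σ 0 = 0) (hσ'0 : deriv σ 0 ≠ 0)
    (hσ'bdd : ∀ x : ℝ, |deriv σ x| ≤ K)
    (hσ'lip : LipschitzWith (Real.toNNReal K) (deriv σ))
    (w : Θ → EuclideanSpace ℝ (Fin d)) (hw : Measurable w)
    (W : Θ → Θ → ℝ) (hW : Measurable (Function.uncurry W))
    (hWbdd : ∀ θ θ', |W θ θ'| ≤ R)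
    -- (b) universal approximation
    (hUA : ∀ g : EuclideanSpace ℝ (Fin d) → ℝ, MemLp g 2 ν₀ →
      (∀ u : EuclideanSpace ℝ (Fin d), ∫ x, g x * σ (inner ℝ u x) ∂ν₀ = 0) → g =ᵐ[ν₀] 0)
    -- (c) diversity of the weights
    (hdiv : ∀ (u₁ : EuclideanSpace ℝ (Fin d)) (u₂ u₃ : Θ → ℝ),
      Measurable u₂ → (∀ θ, |u₂ θ| ≤ R) → Measurable u₃ → (∀ θ, |u₃ θ| ≤ R) →
      ∀ ε : ℝ, 0 < ε →
        0 < P {θ | ‖w θ - u₁‖ < ε ∧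
          Real.sqrt (∫ θ', (W θ' θ - u₂ θ') ^ 2 ∂P) < ε ∧
          Real.sqrt (∫ θ', (W θ θ' - u₃ θ') ^ 2 ∂P) < ε}) :
    ∀ g : EuclideanSpace ℝ (Fin d) → ℝ, MemLp g 2 ν₀ →
      (∀ᵐ θ ∂P, ∫ y, g y * Gnet P T σ w W L θ y ∂ν₀ = 0) → g =ᵐ[ν₀] 0 := by
  intro g hg horthg
  have hgsm := hg.aestronglyMeasurable
  set gm : EuclideanSpace ℝ (Fin d) → ℝ := hgsm.mk g with hgmdef
  have hgmM : Measurable gm := hgsm.stronglyMeasurable_mk.measurable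
  have hggm : g =ᵐ[ν₀] gm := hgsm.ae_eq_mk
  have hgm2 : MemLp gm 2 ν₀ := hg.ae_eq hggm
  have hgm1 : Integrable gm ν₀ := hgm2.integrable one_le_two
  have hK : (0:ℝ) < K := lt_of_lt_of_le hR hRK
  have hσc : Continuous σ := hσdiff.continuous
  have hσd : ∀ a b : ℝ, |σ a - σ b| ≤ K * |a - b| := by
    intro a b
    have := hσlip.dist_le_mul a b
    rwa [Real.dist_eq, Real.dist_eq, Real.coe_toNNReal K hK.le] at this
  have hσK : ∀ x : ℝ, |σ x| ≤ K * |x| := fun x => by simpa [hσ0] using hσd x 0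
  have hGb : ∀ j θ y, |Gnet P T σ w W j θ y| ≤ K := Gnet_abs_le hσbdd
  have hGjm : ∀ j, Measurable (fun p : Θ × EuclideanSpace ℝ (Fin d) =>
      Gnet P T σ w W j p.1 p.2) := measurable_Gnet hσc hT hw hW
  have hGθ : ∀ j θ, Measurable (fun y => Gnet P T σ w W j θ y) := fun j θ =>
    (hGjm j).comp (measurable_prodMk_left)
  have hGy : ∀ j y, Measurable (fun θ => Gnet P T σ w W j θ y) := fun j y =>
    (hGjm j).comp (measurable_prodMk_right)
  set φ : ℕ → Θ → ℝ := fun j θ => ∫ y, gm y * Gnet P T σ w W j θ y ∂ν₀ with hφdef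
  -- measurability of φ
  have hφm : ∀ j, Measurable (φ j) := by
    intro j
    have : Measurable (fun q : Θ × EuclideanSpace ℝ (Fin d) =>
        gm q.2 * Gnet P T σ w W j q.1 q.2) := (hgmM.comp measurable_snd).mul (hGjm j)
    exact this.stronglyMeasurable.integral_prod_right'.measurable
  -- integrability of y ↦ gm y * h y for bounded a.e.-meas h
  have hIg : ∀ (h : EuclideanSpace ℝ (Fin d) → ℝ) (C : ℝ), AEStronglyMeasurable h ν₀ →
      (∀ y, |h y| ≤ C) → Integrable (fun y => gm y * h y) ν₀ := by
    intro h C hm hb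
    refine (hgm1.norm.const_mul C).mono' (hgm1.aestronglyMeasurable.mul hm) ?_
    filter_upwards with y
    rw [Real.norm_eq_abs, Real.norm_eq_abs, abs_mul]
    have h0C : 0 ≤ C := le_trans (abs_nonneg _) (hb y)
    calc |gm y| * |h y| ≤ |gm y| * C := by
          exact mul_le_mul_of_nonneg_left (hb y) (abs_nonneg _)
      _ = C * |gm y| := mul_comm _ _
  -- bound on φ
  have hφb : ∀ j θ, |φ j θ| ≤ K * ∫ y, |gm y| ∂ν₀ := by
    intro j θ
    have hintabs : Integrable (fun y => |gm y| * |Gnet P T σ w W j θ y|) ν₀ := by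
      have := (hIg _ K (hGθ j θ).aestronglyMeasurable (hGb j θ)).abs
      simpa only [abs_mul] using this
    calc |φ j θ| ≤ ∫ y, |gm y| * |Gnet P T σ w W j θ y| ∂ν₀ := by
          simpa [Real.norm_eq_abs, abs_mul] using
            norm_integral_le_integral_norm (fun y => gm y * Gnet P T σ w W j θ y) (μ := ν₀)
      _ ≤ ∫ y, K * |gm y| ∂ν₀ := by
          apply integral_mono hintabs (hgm1.abs.const_mul K)
          intro y
          show |gm y| * |Gnet P T σ w W j θ y| ≤ K * |gm y|
          calc |gm y| * |Gnet P T σ w W j θ y| ≤ |gm y| * K :=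
                mul_le_mul_of_nonneg_left (hGb j θ y) (abs_nonneg _)
            _ = K * |gm y| := mul_comm _ _
      _ = K * ∫ y, |gm y| ∂ν₀ := integral_const_mul K _
  have hφint : ∀ j, Integrable (φ j) P := by
    intro j
    exact memLp_one_iff_integrable.mp <| MemLp.of_bound (hφm j).aestronglyMeasurable _
      (Filter.Eventually.of_forall fun θ => by
        rw [Real.norm_eq_abs]; exact hφb j θ)
  -- integrability in θ' of bounded-weight integrands
  have hIθ : ∀ (u : Θ → ℝ), Measurable u → (∀ θ, |u θ| ≤ R) → ∀ (j : ℕ) y,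
      Integrable (fun θ' => u θ' * Gnet P T σ w W j θ' y) P := by
    intro u hu hub j y
    refine (integrable_const (R * K)).mono' ((hu.mul (hGy j y)).aestronglyMeasurable) ?_
    filter_upwards with θ'
    rw [Real.norm_eq_abs, abs_mul]
    exact mul_le_mul (hub θ') (hGb j θ' y) (abs_nonneg _) hR.le
  -- measurability of parametric integrals
  have hbm : ∀ (u : Θ → ℝ), Measurable u → ∀ j : ℕ,
      Measurable (fun y => ∫ θ', u θ' * Gnet P T σ w W j θ' y ∂P) := by
    intro u hu j
    have : Measurable (fun q : (EuclideanSpace ℝ (Fin d)) × Θ =>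
        u q.2 * Gnet P T σ w W j q.2 q.1) :=
      (hu.comp measurable_snd).mul ((hGjm j).comp (measurable_snd.prodMk measurable_fst))
    exact this.stronglyMeasurable.integral_prod_right'.measurable
  -- translate the hypothesis
  have hφL : ∀ᵐ θ ∂P, φ L θ = 0 := by
    filter_upwards [horthg] with θ hθ
    rw [← hθ]
    apply integral_congr_ae
    filter_upwards [hggm] with y hy
    rw [hy]
  -- the inductive step
  have step : ∀ j : ℕ, (∀ᵐ θ ∂P, φ (j+1) θ = 0) → (∀ᵐ θ ∂P, φ j θ = 0) := by
    intro j hj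
    -- Claim A: orthogonality extends to arbitrary admissible weights (with `u₁ = 0`)
    have claimA : ∀ (u₃ : Θ → ℝ), Measurable u₃ → (∀ θ, |u₃ θ| ≤ R) →
        ∫ y, gm y * σ (∫ θ', u₃ θ' * Gnet P T σ w W j θ' y ∂P) ∂ν₀ = 0 := by
      intro u₃ hu₃ hu₃b
      have hsel : ∀ n : ℕ, ∃ θ, ‖w θ - 0‖ < 1/(n+1) ∧
          Real.sqrt (∫ θ', (W θ θ' - u₃ θ') ^ 2 ∂P) < 1/(n+1) ∧ φ (j+1) θ = 0 := by
        intro n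
        have hε : (0:ℝ) < 1/(n+1) := by positivity
        have hpos := hdiv 0 (fun _ => 0) u₃ measurable_const
          (fun _ => by simpa using hR.le) hu₃ hu₃b _ hε
        have hN : P {θ | ¬ φ (j+1) θ = 0} = 0 := ae_iff.mp hj
        rw [← measure_diff_null hN] at hpos
        obtain ⟨θ₀, hθS, hθN⟩ := nonempty_of_measure_ne_zero hpos.ne'
        exact ⟨θ₀, hθS.1, hθS.2.2, not_not.mp hθN⟩
      choose θs h1 h2 h3 using hsel
      -- bound on the difference of the inner integrals
      have hinner : ∀ (n : ℕ) y, |(∫ θ', W (θs n) θ' * Gnet P T σ w W j θ' y ∂P) -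
          ∫ θ', u₃ θ' * Gnet P T σ w W j θ' y ∂P| ≤ K * (1/(n+1)) := by
        intro n y
        have hWsec : Measurable (fun θ' => W (θs n) θ') := hW.comp measurable_prodMk_left
        have hWsb : ∀ θ', |W (θs n) θ'| ≤ R := fun θ' => hWbdd _ _
        have hint1 := hIθ _ hWsec hWsb j y
        have hint2 := hIθ _ hu₃ hu₃b j y
        have hmeas : Measurable (fun θ' => W (θs n) θ' - u₃ θ') := hWsec.sub hu₃
        have hml2 : MemLp (fun θ' => W (θs n) θ' - u₃ θ') 2 P :=
          MemLp.of_bound hmeas.aestronglyMeasurable (R + R)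
            (Filter.Eventually.of_forall fun θ' => by
              rw [Real.norm_eq_abs]
              exact (abs_sub _ _).trans (add_le_add (hWbdd _ _) (hu₃b _)))
        have hdabs : Integrable (fun θ' => |W (θs n) θ' - u₃ θ'|) P := by
          refine (integrable_const (R + R)).mono' hmeas.abs.aestronglyMeasurable ?_
          filter_upwards with θ'
          rw [Real.norm_eq_abs, abs_abs]
          exact (abs_sub _ _).trans (add_le_add (hWbdd _ _) (hu₃b _))
        have hCS := integral_abs_le_sqrt_integral_sq P hml2
        rw [← integral_sub hint1 hint2]
        have habs : Integrable (fun θ' =>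
            |W (θs n) θ' * Gnet P T σ w W j θ' y - u₃ θ' * Gnet P T σ w W j θ' y|) P :=
          (hint1.sub hint2).abs
        calc |∫ θ', (W (θs n) θ' * Gnet P T σ w W j θ' y
                - u₃ θ' * Gnet P T σ w W j θ' y) ∂P|
            ≤ ∫ θ', |W (θs n) θ' * Gnet P T σ w W j θ' y
                - u₃ θ' * Gnet P T σ w W j θ' y| ∂P := by
              simpa [Real.norm_eq_abs] using norm_integral_le_integral_norm
                (fun θ' => W (θs n) θ' * Gnet P T σ w W j θ' y
                  - u₃ θ' * Gnet P T σ w W j θ' y) (μ := P)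
          _ ≤ ∫ θ', |W (θs n) θ' - u₃ θ'| * K ∂P := by
              apply integral_mono habs (hdabs.mul_const K)
              intro θ'
              show |W (θs n) θ' * Gnet P T σ w W j θ' y
                  - u₃ θ' * Gnet P T σ w W j θ' y| ≤ |W (θs n) θ' - u₃ θ'| * K
              rw [← sub_mul, abs_mul]
              exact mul_le_mul_of_nonneg_left (hGb j θ' y) (abs_nonneg _)
          _ = (∫ θ', |W (θs n) θ' - u₃ θ'| ∂P) * K := integral_mul_const _ _
          _ ≤ Real.sqrt (∫ θ', (W (θs n) θ' - u₃ θ') ^ 2 ∂P) * K :=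
              mul_le_mul_of_nonneg_right hCS hK.le
          _ ≤ (1/(n+1)) * K := mul_le_mul_of_nonneg_right (h2 n).le hK.le
          _ = K * (1/(n+1)) := mul_comm _ _
      -- dominated convergence
      have key : Tendsto (fun n => ∫ y, gm y * Gnet P T σ w W (j+1) (θs n) y ∂ν₀) atTop
          (𝓝 (∫ y, gm y * σ (∫ θ', u₃ θ' * Gnet P T σ w W j θ' y ∂P) ∂ν₀)) := by
        apply tendsto_integral_of_dominated_convergence (fun y => K * |gm y|)
        · intro n
          exact (hgmM.mul (hGθ (j+1) (θs n))).aestronglyMeasurable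
        · exact hgm1.abs.const_mul K
        · intro n
          filter_upwards with y
          rw [Real.norm_eq_abs, abs_mul]
          calc |gm y| * |Gnet P T σ w W (j+1) (θs n) y| ≤ |gm y| * K :=
                mul_le_mul_of_nonneg_left (hGb _ _ _) (abs_nonneg _)
            _ = K * |gm y| := mul_comm _ _
        · filter_upwards with y
          have harg : Tendsto (fun n => (∫ θ', W (θs n) θ' * Gnet P T σ w W j θ' y ∂P)
              + (inner ℝ (w (θs n)) (T^[j+1] y) : ℝ)) atTop
              (𝓝 (∫ θ', u₃ θ' * Gnet P T σ w W j θ' y ∂P)) := by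
            rw [tendsto_iff_dist_tendsto_zero]
            apply squeeze_zero (fun n => dist_nonneg)
              (g := fun n : ℕ => (K + ‖T^[j+1] y‖) * (1/(n+1)))
            · intro n
              rw [Real.dist_eq]
              have hi : |(inner ℝ (w (θs n)) (T^[j+1] y) : ℝ)| ≤ ‖T^[j+1] y‖ * (1/(n+1)) := by
                calc |(inner ℝ (w (θs n)) (T^[j+1] y) : ℝ)| ≤ ‖w (θs n)‖ * ‖T^[j+1] y‖ :=
                      abs_real_inner_le_norm _ _
                  _ ≤ (1/(n+1)) * ‖T^[j+1] y‖ := by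
                      apply mul_le_mul_of_nonneg_right _ (norm_nonneg _)
                      exact le_of_lt (by simpa [sub_zero] using h1 n)
                  _ = ‖T^[j+1] y‖ * (1/(n+1)) := mul_comm _ _
              calc |(∫ θ', W (θs n) θ' * Gnet P T σ w W j θ' y ∂P)
                    + (inner ℝ (w (θs n)) (T^[j+1] y) : ℝ)
                    - ∫ θ', u₃ θ' * Gnet P T σ w W j θ' y ∂P|
                  ≤ |(∫ θ', W (θs n) θ' * Gnet P T σ w W j θ' y ∂P)
                    - ∫ θ', u₃ θ' * Gnet P T σ w W j θ' y ∂P|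
                    + |(inner ℝ (w (θs n)) (T^[j+1] y) : ℝ)| := by
                    rw [add_sub_right_comm]
                    exact abs_add_le _ _
                _ ≤ K * (1/(n+1)) + ‖T^[j+1] y‖ * (1/(n+1)) :=
                    add_le_add (hinner n y) hi
                _ = (K + ‖T^[j+1] y‖) * (1/(n+1)) := by ring
            · simpa using tendsto_one_div_add_atTop_nhds_zero_nat.const_mul
                (K + ‖T^[j+1] y‖)
          have := ((hσc.tendsto _).comp harg).const_mul (gm y)
          simpa [Function.comp, Gnet] using this
      have h3' : ∀ n, (∫ y, gm y * Gnet P T σ w W (j+1) (θs n) y ∂ν₀) = 0 := fun n => h3 n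
      simp only [h3'] at key
      exact tendsto_nhds_unique key tendsto_const_nhds
    -- Claim B: differentiating at 0 in the direction of bounded weights
    have claimB : ∀ (v : Θ → ℝ), Measurable v → (∀ θ, |v θ| ≤ R) →
        ∫ y, gm y * (∫ θ', v θ' * Gnet P T σ w W j θ' y ∂P) ∂ν₀ = 0 := by
      intro v hv hvb
      set c : EuclideanSpace ℝ (Fin d) → ℝ :=
        fun y => ∫ θ', v θ' * Gnet P T σ w W j θ' y ∂P with hc
      have hcm : Measurable c := hbm v hv j
      have hcb : ∀ y, |c y| ≤ R * K := by
        intro y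
        have := norm_integral_le_of_norm_le_const (μ := P) (C := R * K)
          (f := fun θ' => v θ' * Gnet P T σ w W j θ' y)
          (Filter.Eventually.of_forall fun θ' => by
            rw [Real.norm_eq_abs, abs_mul]
            exact mul_le_mul (hvb _) (hGb _ _ _) (abs_nonneg _) hR.le)
        simpa [Real.norm_eq_abs] using this
      have hFn : ∀ n : ℕ, ∫ y, gm y * σ (c y / (n+1)) ∂ν₀ = 0 := by
        intro n
        have hb' : ∀ θ, |v θ / ((n:ℝ)+1)| ≤ R := by
          intro θ
          rw [abs_div, abs_of_pos (show (0:ℝ) < (n:ℝ)+1 by positivity)]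
          exact le_trans (div_le_self (abs_nonneg _) (by exact_mod_cast Nat.le_add_left 1 n))
            (hvb θ)
        have hA := claimA (fun θ => v θ / ((n:ℝ)+1)) (hv.div_const _) hb'
        have heq : ∀ y, (∫ θ', (v θ' / ((n:ℝ)+1)) * Gnet P T σ w W j θ' y ∂P)
            = c y / ((n:ℝ)+1) := by
          intro y
          rw [hc]
          rw [← integral_div]
          congr 1
          funext θ'
          ring
        simpa only [heq] using hA
      have key : Tendsto (fun n : ℕ => ∫ y, ((n:ℝ)+1) * (gm y * σ (c y / (n+1))) ∂ν₀) atTop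
          (𝓝 (∫ y, deriv σ 0 * (gm y * c y) ∂ν₀)) := by
        apply tendsto_integral_of_dominated_convergence (fun y => K * (R*K) * |gm y|)
        · intro n
          exact ((hgmM.mul (hσc.measurable.comp (hcm.div_const _))).const_mul _).aestronglyMeasurable
        · exact hgm1.abs.const_mul _
        · intro n
          filter_upwards with y
          rw [Real.norm_eq_abs, abs_mul, abs_mul]
          have hpos : (0:ℝ) < (n:ℝ)+1 := by positivity
          have hd : |c y / ((n:ℝ)+1)| = |c y| / ((n:ℝ)+1) := by
            rw [abs_div, abs_of_pos hpos]
          calc |((n:ℝ)+1)| * (|gm y| * |σ (c y / ((n:ℝ)+1))|)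
              ≤ |((n:ℝ)+1)| * (|gm y| * (K * (|c y| / ((n:ℝ)+1)))) := by
                apply mul_le_mul_of_nonneg_left _ (abs_nonneg _)
                apply mul_le_mul_of_nonneg_left _ (abs_nonneg _)
                rw [← hd]
                exact hσK _
            _ = K * |c y| * |gm y| := by
                rw [abs_of_pos hpos]
                field_simp
            _ ≤ K * (R*K) * |gm y| := by
                apply mul_le_mul_of_nonneg_right _ (abs_nonneg _)
                exact mul_le_mul_of_nonneg_left (hcb y) hK.le
        · filter_upwards with y
          by_cases hcy : c y = 0
          · simpa [hcy, hσ0] using tendsto_const_nhds (α := ℝ) (f := atTop (α := ℕ)) (a := 0)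
          · have hslope : Tendsto (slope σ 0) (𝓝[≠] 0) (𝓝 (deriv σ 0)) :=
              hasDerivAt_iff_tendsto_slope.mp (hσdiff 0).hasDerivAt
            have hseq : Tendsto (fun n : ℕ => c y / ((n:ℝ)+1)) atTop (𝓝[≠] (0:ℝ)) := by
              rw [tendsto_nhdsWithin_iff]
              constructor
              · have := tendsto_one_div_add_atTop_nhds_zero_nat.const_mul (c y)
                simpa [div_eq_mul_inv, one_div] using this
              · filter_upwards with n
                exact Set.mem_compl_singleton_iff.mpr
                  (div_ne_zero hcy (by positivity))
            rw [show deriv σ 0 * (gm y * c y) = gm y * c y * deriv σ 0 by ring]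
            apply Filter.Tendsto.congr _ ((hslope.comp hseq).const_mul (gm y * c y))
            intro n
            show gm y * c y * slope σ 0 (c y / ((n:ℝ)+1)) = _
            rw [slope_def_field]
            have hpos : ((n:ℝ)+1) ≠ 0 := by positivity
            have hcy' : c y ≠ 0 := hcy
            rw [hσ0, sub_zero, sub_zero]
            field_simp <;> ring
      have hint0 : ∀ n : ℕ, ∫ y, ((n:ℝ)+1) * (gm y * σ (c y / (n+1))) ∂ν₀ = 0 := by
        intro n
        rw [integral_const_mul, hFn n, mul_zero]
      simp only [hint0] at key
      have hz : ∫ y, deriv σ 0 * (gm y * c y) ∂ν₀ = 0 :=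
        tendsto_nhds_unique key tendsto_const_nhds
      rw [integral_const_mul] at hz
      exact (mul_eq_zero.mp hz).resolve_left hσ'0
    -- Fubini: orthogonality at level j against every bounded weight
    have hφj0 : ∀ (v : Θ → ℝ), Measurable v → (∀ θ, |v θ| ≤ R) →
        ∫ θ', v θ' * φ j θ' ∂P = 0 := by
      intro v hv hvb
      have hB := claimB v hv hvb
      have hm : AEStronglyMeasurable (Function.uncurry fun y θ' =>
          gm y * (v θ' * Gnet P T σ w W j θ' y)) (ν₀.prod P) := by
        apply Measurable.aestronglyMeasurable
        apply Measurable.mul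
        · exact hgmM.comp measurable_fst
        · apply Measurable.mul
          · exact hv.comp measurable_snd
          · exact (hGjm j).comp (measurable_snd.prodMk measurable_fst)
      have hprod : Integrable (Function.uncurry fun y θ' =>
          gm y * (v θ' * Gnet P T σ w W j θ' y)) (ν₀.prod P) := by
        refine ((integrable_comp_fst' P hgm1.abs).mul_const (R*K)).mono' hm ?_
        filter_upwards with p
        rw [Real.norm_eq_abs]
        show |gm p.1 * (v p.2 * Gnet P T σ w W j p.2 p.1)| ≤ |gm p.1| * (R * K)
        rw [abs_mul, abs_mul]
        apply mul_le_mul_of_nonneg_left _ (abs_nonneg _)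
        exact mul_le_mul (hvb _) (hGb _ _ _) (abs_nonneg _) hR.le
      have hswap := integral_integral_swap hprod
      have lhs_eq : ∫ y, ∫ θ', gm y * (v θ' * Gnet P T σ w W j θ' y) ∂P ∂ν₀
          = ∫ y, gm y * (∫ θ', v θ' * Gnet P T σ w W j θ' y ∂P) ∂ν₀ := by
        apply integral_congr_ae
        filter_upwards with y
        exact integral_const_mul _ _
      have rhs_eq : ∫ θ', ∫ y, gm y * (v θ' * Gnet P T σ w W j θ' y) ∂ν₀ ∂P
          = ∫ θ', v θ' * φ j θ' ∂P := by
        apply integral_congr_ae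
        filter_upwards with θ'
        rw [show v θ' * φ j θ' = v θ' * ∫ y, gm y * Gnet P T σ w W j θ' y ∂ν₀ from rfl]
        rw [← integral_const_mul]
        apply integral_congr_ae
        filter_upwards with y
        ring
      calc ∫ θ', v θ' * φ j θ' ∂P
          = ∫ θ', ∫ y, gm y * (v θ' * Gnet P T σ w W j θ' y) ∂ν₀ ∂P := rhs_eq.symm
        _ = ∫ y, ∫ θ', gm y * (v θ' * Gnet P T σ w W j θ' y) ∂P ∂ν₀ := hswap.symm
        _ = ∫ y, gm y * (∫ θ', v θ' * Gnet P T σ w W j θ' y ∂P) ∂ν₀ := lhs_eq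
        _ = 0 := hB
    -- choose the sign of φ j as the weight
    have hvm : Measurable (fun θ => if 0 ≤ φ j θ then R else -R) :=
      Measurable.ite (measurableSet_le measurable_const (hφm j))
        measurable_const measurable_const
    have hvb : ∀ θ, |(fun θ => if 0 ≤ φ j θ then R else -R) θ| ≤ R := by
      intro θ
      by_cases h : 0 ≤ φ j θ <;> simp [h, abs_of_nonneg hR.le]
    have h0 := hφj0 _ hvm hvb
    have heqv : ∀ θ, (if 0 ≤ φ j θ then R else -R) * φ j θ = R * |φ j θ| := by
      intro θ
      by_cases h : 0 ≤ φ j θ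
      · rw [if_pos h, abs_of_nonneg h]
      · rw [if_neg h, abs_of_neg (lt_of_not_ge h)]
        ring
    have habs0 : ∫ θ', R * |φ j θ'| ∂P = 0 := by
      rw [← h0]
      apply integral_congr_ae
      filter_upwards with θ
      exact (heqv θ).symm
    rw [integral_const_mul] at habs0
    have hiz : ∫ θ', |φ j θ'| ∂P = 0 := (mul_eq_zero.mp habs0).resolve_left hR.ne'
    have := (integral_eq_zero_iff_of_nonneg (fun θ => abs_nonneg _) (hφint j).abs).mp hiz
    filter_upwards [this] with θ hθ
    exact abs_eq_zero.mp hθ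
  -- downward induction
  have key : ∀ j : ℕ, (∀ᵐ θ ∂P, φ j θ = 0) → (∀ᵐ θ ∂P, φ 0 θ = 0) := by
    intro j
    induction j with
    | zero => exact id
    | succ j ih => intro h; exact ih (step j h)
  have hφ0 : ∀ᵐ θ ∂P, φ 0 θ = 0 := key L hφL
  -- final step: from φ 0 ≡ 0 a.e. to orthogonality to all single neurons
  have hneuron : ∀ u : EuclideanSpace ℝ (Fin d), ∫ x, gm x * σ (inner ℝ u x) ∂ν₀ = 0 := by
    intro u
    have hsel : ∀ n : ℕ, ∃ θ, ‖w θ - u‖ < 1/(n+1) ∧ φ 0 θ = 0 := by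
      intro n
      have hε : (0:ℝ) < 1/(n+1) := by positivity
      have hpos := hdiv u (fun _ => 0) (fun _ => 0) measurable_const
        (fun _ => by simpa using hR.le) measurable_const (fun _ => by simpa using hR.le) _ hε
      have hN : P {θ | ¬ φ 0 θ = 0} = 0 := ae_iff.mp hφ0
      rw [← measure_diff_null hN] at hpos
      obtain ⟨θ₀, hθS, hθN⟩ := nonempty_of_measure_ne_zero hpos.ne'
      exact ⟨θ₀, hθS.1, not_not.mp hθN⟩
    choose θs h1 h2 using hsel
    have h3 : ∀ n, (∫ y, gm y * σ (inner ℝ (w (θs n)) y) ∂ν₀) = 0 := fun n => h2 n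
    have key : Tendsto (fun n => ∫ y, gm y * σ (inner ℝ (w (θs n)) y) ∂ν₀) atTop
        (𝓝 (∫ y, gm y * σ (inner ℝ u y) ∂ν₀)) := by
      apply tendsto_integral_of_dominated_convergence (fun y => K * |gm y|)
      · intro n
        exact hgm1.aestronglyMeasurable.mul
          ((hσc.comp (continuous_const.inner continuous_id)).aestronglyMeasurable)
      · exact hgm1.abs.const_mul K
      · intro n
        filter_upwards with y
        rw [Real.norm_eq_abs, abs_mul]
        calc |gm y| * |σ (inner ℝ (w (θs n)) y)| ≤ |gm y| * K :=
              mul_le_mul_of_nonneg_left (hσbdd _) (abs_nonneg _)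
          _ = K * |gm y| := mul_comm _ _
      · filter_upwards with y
        have harg : Tendsto (fun n => (inner ℝ (w (θs n)) y : ℝ)) atTop
            (𝓝 (inner ℝ u y)) := by
          rw [tendsto_iff_dist_tendsto_zero]
          apply squeeze_zero (fun n => dist_nonneg)
            (g := fun n : ℕ => ‖y‖ * (1/(n+1)))
          · intro n
            rw [Real.dist_eq]
            have : (inner ℝ (w (θs n)) y : ℝ) - inner ℝ u y = inner ℝ (w (θs n) - u) y := by
              rw [inner_sub_left]
            rw [this]
            calc |(inner ℝ (w (θs n) - u) y : ℝ)| ≤ ‖w (θs n) - u‖ * ‖y‖ :=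
                  abs_real_inner_le_norm _ _
              _ ≤ (1/(n+1)) * ‖y‖ := mul_le_mul_of_nonneg_right (h1 n).le (norm_nonneg _)
              _ = ‖y‖ * (1/(n+1)) := mul_comm _ _
          · simpa using tendsto_one_div_add_atTop_nhds_zero_nat.const_mul ‖y‖
        have := ((hσc.tendsto _).comp harg).const_mul (gm y)
        simpa [Function.comp] using this
    simp only [h3] at key
    exact (tendsto_nhds_unique key tendsto_const_nhds)
  have hgm0 : gm =ᵐ[ν₀] 0 := by
    apply hUA gm hgm2
    intro u
    exact hneuron u
  exact hggm.trans hgm0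
end

section
/- Under hypotheses (a) σ is bounded by K, K-Lipschitz, differentiable with σ(0) = 0 and σ′(0) ≠ 0, with K-bounded, K-Lipschitz derivative; (b) every g ∈ L²(ν₀) with ∫ g(x) σ(u·x) dν₀(x) = 0 for all u ∈ ℝ^d vanishes ν₀-almost everywhere; and (c) for every u₁ ∈ ℝ^d, u₂, u₃ ∈ L_R^∞(P) and ε > 0, P({θ : ‖w(θ) − u₁‖ < ε, ‖W(·,θ) − u₂‖_{L²(P)} < ε, ‖W(θ,·) − u₃‖_{L²(P)} < ε}) > 0, the set of realizable network outputs { y ↦ ∫_Θ a(θ) G(θ; y, 0) dP(θ) : a ∈ L²(P) } is dense in L²(ν₀). -/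
open MeasureTheory Filter Topology

section Helpers

variable {α : Type*} [MeasurableSpace α] {μ : Measure α}

lemma integrable_of_bdd [IsFiniteMeasure μ] {f : α → ℝ} (hm : AEStronglyMeasurable f μ)
    (C : ℝ) (h : ∀ x, |f x| ≤ C) : Integrable f μ :=
  (memLp_one_iff_integrable.mp (MemLp.of_bound hm C (Eventually.of_forall h)))

lemma memLp2_of_bdd [IsFiniteMeasure μ] {f : α → ℝ} (hm : AEStronglyMeasurable f μ)
    (C : ℝ) (h : ∀ x, |f x| ≤ C) : MemLp f 2 μ :=
  MemLp.of_bound hm C (Eventually.of_forall h)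

lemma int_abs_le_sqrt [IsProbabilityMeasure μ] {f : α → ℝ} (hm : Measurable f)
    (C : ℝ) (hb : ∀ x, |f x| ≤ C) : ∫ x, |f x| ∂μ ≤ Real.sqrt (∫ x, (f x) ^ 2 ∂μ) := by
  have hpq : (2 : ℝ).HolderConjugate 2 := Real.HolderConjugate.two_two
  have h2 : MemLp f (ENNReal.ofReal 2) μ := by
    rw [ENNReal.ofReal_ofNat]
    exact memLp2_of_bdd hm.aestronglyMeasurable C hb
  have h1 : MemLp (fun _ : α => (1 : ℝ)) (ENNReal.ofReal 2) μ := memLp_const 1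
  have H := integral_mul_norm_le_Lp_mul_Lq hpq h2 h1
  simp only [norm_one, mul_one, Real.norm_eq_abs, Real.one_rpow, integral_const,
    measure_univ, ENNReal.toReal_one, one_smul, Real.one_rpow, probReal_univ, smul_eq_mul] at H
  calc ∫ x, |f x| ∂μ ≤ (∫ x, |f x| ^ (2:ℝ) ∂μ) ^ (1/(2:ℝ)) := H
    _ = Real.sqrt (∫ x, (f x) ^ 2 ∂μ) := by
        rw [Real.sqrt_eq_rpow]
        congr 1
        refine integral_congr_ae (Eventually.of_forall fun x => ?_)
        simp only [show ((2:ℝ)) = ((2:ℕ):ℝ) by norm_num, Real.rpow_natCast, sq_abs]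

lemma ae_zero_of_tests {R : ℝ} (hR : 0 < R) [IsProbabilityMeasure μ] {h : α → ℝ}
    (hm : Measurable h) (C : ℝ) (hb : ∀ x, |h x| ≤ C)
    (htest : ∀ v : α → ℝ, Measurable v → (∀ x, |v x| ≤ R) → ∫ x, v x * h x ∂μ = 0) :
    ∀ᵐ x ∂μ, h x = 0 := by
  set v : α → ℝ := fun x => if 0 ≤ h x then R else -R with hv
  have hvm : Measurable v :=
    Measurable.ite (measurableSet_le measurable_const hm) measurable_const measurable_const
  have hvb : ∀ x, |v x| ≤ R := by
    intro x; by_cases hx : 0 ≤ h x <;> simp [v, hx, abs_of_pos hR]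
  have key : ∀ x, v x * h x = R * |h x| := by
    intro x; by_cases hx : 0 ≤ h x
    · simp [v, hx, abs_of_nonneg hx]
    · simp only [v, hx, if_false, abs_of_neg (lt_of_not_ge hx)]; ring
  have h0 : ∫ x, R * |h x| ∂μ = 0 := by
    rw [← htest v hvm hvb]
    exact integral_congr_ae (Eventually.of_forall fun x => (key x).symm)
  rw [integral_const_mul] at h0
  have habs : ∫ x, |h x| ∂μ = 0 := by
    rcases mul_eq_zero.mp h0 with h' | h'
    · exact absurd h' (ne_of_gt hR)
    · exact h'
  have hint : Integrable (fun x => |h x|) μ :=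
    (integrable_of_bdd hm.aestronglyMeasurable C hb).abs
  have := (integral_eq_zero_iff_of_nonneg (fun x => abs_nonneg (h x)) hint).mp habs
  filter_upwards [this] with x hx
  exact abs_eq_zero.mp hx

lemma deriv_limit_aux (σ : ℝ → ℝ) (hσdiff : Differentiable ℝ σ) (hσ0 : σ 0 = 0) (c : ℝ) :
    Tendsto (fun n : ℕ => ((n:ℝ)+1) * σ (c / ((n:ℝ)+1))) atTop (𝓝 (deriv σ 0 * c)) := by
  have hσd : HasDerivAt σ (deriv σ 0) ((fun t : ℝ => t * c) 0) := by
    simpa using (hσdiff 0).hasDerivAt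
  have hd : HasDerivAt (fun t : ℝ => σ (t * c)) (deriv σ 0 * c) 0 :=
    hσd.comp 0 (hasDerivAt_mul_const c)
  have hs := hasDerivAt_iff_tendsto_slope.mp hd
  have hseq : Tendsto (fun n : ℕ => 1 / ((n:ℝ) + 1)) atTop (𝓝[≠] (0:ℝ)) := by
    refine tendsto_nhdsWithin_of_tendsto_nhds_of_eventually_within _
      tendsto_one_div_add_atTop_nhds_zero_nat (Eventually.of_forall fun n => ?_)
    simp only [Set.mem_compl_iff, Set.mem_singleton_iff]
    positivity
  have := hs.comp hseq
  refine this.congr fun n => ?_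
  have hn : ((n:ℝ) + 1) ≠ 0 := by positivity
  simp only [Function.comp_apply, slope_def_field, zero_mul, hσ0, sub_zero]
  rw [div_mul_eq_mul_div, one_mul]
  field_simp

end Helpers

section GnetLemmas

variable {Θ : Type*} [MeasurableSpace Θ] {P : Measure Θ} {d : ℕ}
    {T : EuclideanSpace ℝ (Fin d) → EuclideanSpace ℝ (Fin d)}
    {σ : ℝ → ℝ} {w : Θ → EuclideanSpace ℝ (Fin d)} {W : Θ → Θ → ℝ}

lemma Gnet_exists_sigma (j : ℕ) (θ : Θ) (y : EuclideanSpace ℝ (Fin d)) :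
    ∃ z, Gnet P T σ w W j θ y = σ z := by
  cases j <;> exact ⟨_, rfl⟩

lemma Gnet_bound {K : ℝ} (hσbdd : ∀ x : ℝ, |σ x| ≤ K) (j : ℕ) (θ : Θ)
    (y : EuclideanSpace ℝ (Fin d)) : |Gnet P T σ w W j θ y| ≤ K := by
  obtain ⟨z, hz⟩ := Gnet_exists_sigma (P := P) (T := T) (σ := σ) (w := w) (W := W) j θ y
  rw [hz]; exact hσbdd z

lemma Gnet_measurable [SFinite P] (hσc : Continuous σ) (hT : Measurable T)
    (hw : Measurable w) (hW : Measurable (Function.uncurry W)) :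
    ∀ j, Measurable (fun p : Θ × EuclideanSpace ℝ (Fin d) => Gnet P T σ w W j p.1 p.2)
  | 0 => hσc.measurable.comp ((hw.comp measurable_fst).inner measurable_snd)
  | (j + 1) => by
      have hGj := Gnet_measurable hσc hT hw hW j
      have h1 : Measurable (fun q : (Θ × EuclideanSpace ℝ (Fin d)) × Θ =>
          W q.1.1 q.2 * Gnet P T σ w W j q.2 q.1.2) := by
        have hWm : Measurable (fun q : (Θ × EuclideanSpace ℝ (Fin d)) × Θ => W q.1.1 q.2) :=
          hW.comp (measurable_fst.fst.prodMk measurable_snd)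
        exact hWm.mul (hGj.comp (measurable_snd.prodMk measurable_fst.snd))
      have h2 : Measurable (fun p : Θ × EuclideanSpace ℝ (Fin d) =>
          ∫ θ', W p.1 θ' * Gnet P T σ w W j θ' p.2 ∂P) :=
        (h1.stronglyMeasurable.integral_prod_right').measurable
      have h3 : Measurable (fun p : Θ × EuclideanSpace ℝ (Fin d) =>
          (inner ℝ (w p.1) (T^[j+1] p.2) : ℝ)) :=
        (hw.comp measurable_fst).inner ((hT.iterate (j+1)).comp measurable_snd)
      exact hσc.measurable.comp (h2.add h3)

end GnetLemmas

/-- Under regularity of `σ`, universal approximation for single neurons, and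
diversity of the weights, the set of realizable network outputs
`{y ↦ ∫ a(θ) G(θ; y, 0) dP(θ) : a ∈ L²(P)}` is dense in `L²(ν₀)`. -/
theorem statement3
    (Θ : Type*) [MeasurableSpace Θ] (P : Measure Θ) [IsProbabilityMeasure P]
    (d : ℕ) (T : EuclideanSpace ℝ (Fin d) → EuclideanSpace ℝ (Fin d)) (hT : Measurable T)
    (ν₀ : Measure (EuclideanSpace ℝ (Fin d))) [IsProbabilityMeasure ν₀]
    (hmom : Integrable (fun y => ‖y‖ ^ 2) ν₀)
    (L : ℕ) (R K : ℝ) (hR : 0 < R) (hRK : R ≤ K)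
    (σ : ℝ → ℝ)
    (hσbdd : ∀ x : ℝ, |σ x| ≤ K) (hσlip : LipschitzWith (Real.toNNReal K) σ)
    (hσdiff : Differentiable ℝ σ) (hσ0 : σ 0 = 0) (hσ'0 : deriv σ 0 ≠ 0)
    (hσ'bdd : ∀ x : ℝ, |deriv σ x| ≤ K)
    (hσ'lip : LipschitzWith (Real.toNNReal K) (deriv σ))
    (w : Θ → EuclideanSpace ℝ (Fin d)) (hw : Measurable w)
    (W : Θ → Θ → ℝ) (hW : Measurable (Function.uncurry W))
    (hWbdd : ∀ θ θ', |W θ θ'| ≤ R)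
    -- (b) universal approximation
    (hUA : ∀ g : EuclideanSpace ℝ (Fin d) → ℝ, MemLp g 2 ν₀ →
      (∀ u : EuclideanSpace ℝ (Fin d), ∫ x, g x * σ (inner ℝ u x) ∂ν₀ = 0) → g =ᵐ[ν₀] 0)
    -- (c) diversity of the weights
    (hdiv : ∀ (u₁ : EuclideanSpace ℝ (Fin d)) (u₂ u₃ : Θ → ℝ),
      Measurable u₂ → (∀ θ, |u₂ θ| ≤ R) → Measurable u₃ → (∀ θ, |u₃ θ| ≤ R) →
      ∀ ε : ℝ, 0 < ε →
        0 < P {θ | ‖w θ - u₁‖ < ε ∧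
          Real.sqrt (∫ θ', (W θ' θ - u₂ θ') ^ 2 ∂P) < ε ∧
          Real.sqrt (∫ θ', (W θ θ' - u₃ θ') ^ 2 ∂P) < ε}) :
    Dense {F : Lp ℝ 2 ν₀ | ∃ a : Θ → ℝ, MemLp a 2 P ∧
      (F : EuclideanSpace ℝ (Fin d) → ℝ) =ᵐ[ν₀]
        fun y => ∫ θ, a θ * Gnet P T σ w W L θ y ∂P} := by
  classical
  have hK : (0:ℝ) < K := hR.trans_le hRK
  have hσc : Continuous σ := hσlip.continuous
  have hGmeas : ∀ j, Measurable (fun p : Θ × EuclideanSpace ℝ (Fin d) =>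
      Gnet P T σ w W j p.1 p.2) := Gnet_measurable hσc hT hw hW
  have hGbd : ∀ (j : ℕ) (θ : Θ) (y : EuclideanSpace ℝ (Fin d)),
      |Gnet P T σ w W j θ y| ≤ K := fun j θ y => Gnet_bound hσbdd j θ y
  have hGmθ : ∀ (j : ℕ) (y : EuclideanSpace ℝ (Fin d)),
      Measurable (fun θ => Gnet P T σ w W j θ y) :=
    fun j y => (hGmeas j).comp (measurable_id.prodMk measurable_const)
  have hGmy : ∀ (j : ℕ) (θ : Θ), Measurable (fun y => Gnet P T σ w W j θ y) :=
    fun j θ => (hGmeas j).comp (measurable_const.prodMk measurable_id)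
  -- integrability in θ of a θ * G j θ y
  have hint_aG : ∀ (a : Θ → ℝ), Integrable a P → AEStronglyMeasurable a P →
      ∀ (j : ℕ) (y : EuclideanSpace ℝ (Fin d)),
      Integrable (fun θ => a θ * Gnet P T σ w W j θ y) P := by
    intro a ha hasm j y
    refine (ha.abs.const_mul K).mono' (hasm.mul (hGmθ j y).aestronglyMeasurable)
      (Eventually.of_forall fun θ => ?_)
    rw [Real.norm_eq_abs, abs_mul, mul_comm K]
    exact mul_le_mul_of_nonneg_left (hGbd j θ y) (abs_nonneg _)
  -- the submodule of realizable outputs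
  let M : Submodule ℝ (Lp ℝ 2 ν₀) :=
    { carrier := {F : Lp ℝ 2 ν₀ | ∃ a : Θ → ℝ, MemLp a 2 P ∧
        (F : EuclideanSpace ℝ (Fin d) → ℝ) =ᵐ[ν₀]
          fun y => ∫ θ, a θ * Gnet P T σ w W L θ y ∂P}
      zero_mem' := by
        refine ⟨0, MemLp.zero, ?_⟩
        filter_upwards [Lp.coeFn_zero ℝ 2 ν₀] with y hy
        simp [hy]
      add_mem' := by
        rintro F₁ F₂ ⟨a₁, ha₁, he₁⟩ ⟨a₂, ha₂, he₂⟩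
        refine ⟨a₁ + a₂, ha₁.add ha₂, ?_⟩
        filter_upwards [Lp.coeFn_add F₁ F₂, he₁, he₂] with y h1 h2 h3
        rw [h1, Pi.add_apply, h2, h3,
          ← integral_add (hint_aG a₁ (ha₁.integrable one_le_two) ha₁.aestronglyMeasurable L y)
            (hint_aG a₂ (ha₂.integrable one_le_two) ha₂.aestronglyMeasurable L y)]
        refine integral_congr_ae (Eventually.of_forall fun θ => ?_)
        simp [Pi.add_apply]; ring
      smul_mem' := by
        rintro c F ⟨a, ha, he⟩
        refine ⟨c • a, ha.const_smul c, ?_⟩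
        filter_upwards [Lp.coeFn_smul c F, he] with y h1 h2
        rw [h1, Pi.smul_apply, h2, smul_eq_mul, ← integral_const_mul]
        refine integral_congr_ae (Eventually.of_forall fun θ => ?_)
        simp [smul_eq_mul]; ring }
  show Dense (M : Set (Lp ℝ 2 ν₀))
  rw [Submodule.dense_iff_topologicalClosure_eq_top,
    Submodule.topologicalClosure_eq_top_iff, Submodule.eq_bot_iff]
  intro g hg
  rw [Submodule.mem_orthogonal] at hg
  set gf : EuclideanSpace ℝ (Fin d) → ℝ := (g : EuclideanSpace ℝ (Fin d) → ℝ) with hgfdef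
  have hgf_sm : StronglyMeasurable gf := Lp.stronglyMeasurable g
  have hgf_m : Measurable gf := hgf_sm.measurable
  have hgf2 : MemLp gf 2 ν₀ := Lp.memLp g
  have hgf_int : Integrable gf ν₀ := hgf2.integrable one_le_two
  -- the layer functionals
  set hfun : ℕ → Θ → ℝ := fun j θ => ∫ y, gf y * Gnet P T σ w W j θ y ∂ν₀ with hhfun
  have hh_meas : ∀ j, Measurable (hfun j) := by
    intro j
    have : StronglyMeasurable (fun q : Θ × EuclideanSpace ℝ (Fin d) =>
        gf q.2 * Gnet P T σ w W j q.1 q.2) :=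
      ((hgf_m.comp measurable_snd).mul (hGmeas j)).stronglyMeasurable
    exact this.integral_prod_right'.measurable
  have hint_gG : ∀ (j : ℕ) (θ : Θ), Integrable (fun y => gf y * Gnet P T σ w W j θ y) ν₀ := by
    intro j θ
    refine (hgf_int.abs.const_mul K).mono' (hgf_int.aestronglyMeasurable.mul
      (hGmy j θ).aestronglyMeasurable) (Eventually.of_forall fun y => ?_)
    rw [Real.norm_eq_abs, abs_mul, mul_comm K]
    exact mul_le_mul_of_nonneg_left (hGbd j θ y) (abs_nonneg _)
  have hh_bd : ∀ (j : ℕ) (θ : Θ), |hfun j θ| ≤ K * ∫ y, |gf y| ∂ν₀ := by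
    intro j θ
    calc |hfun j θ| = |∫ y, gf y * Gnet P T σ w W j θ y ∂ν₀| := rfl
      _ ≤ ∫ y, |gf y * Gnet P T σ w W j θ y| ∂ν₀ := by
          simpa only [Real.norm_eq_abs] using norm_integral_le_integral_norm
            (fun y => gf y * Gnet P T σ w W j θ y) (μ := ν₀)
      _ ≤ ∫ y, K * |gf y| ∂ν₀ := by
          refine integral_mono (hint_gG j θ).abs (hgf_int.abs.const_mul K) fun y => ?_
          rw [abs_mul, mul_comm K]
          exact mul_le_mul_of_nonneg_left (hGbd j θ y) (abs_nonneg _)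
      _ = K * ∫ y, |gf y| ∂ν₀ := integral_const_mul K _
  -- Fubini
  have fubini : ∀ (j : ℕ) (v : Θ → ℝ), Measurable v → Integrable v P →
      ∫ θ, v θ * hfun j θ ∂P =
        ∫ y, gf y * (∫ θ, v θ * Gnet P T σ w W j θ y ∂P) ∂ν₀ := by
    intro j v hvm hvi
    have hswap : Integrable
        (Function.uncurry fun θ y => v θ * (gf y * Gnet P T σ w W j θ y)) (P.prod ν₀) := by
      have hbnd : Integrable (fun z : Θ × EuclideanSpace ℝ (Fin d) =>
          |v z.1| * (K * |gf z.2|)) (P.prod ν₀) :=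
        hvi.abs.mul_prod (hgf_int.abs.const_mul K)
      refine hbnd.mono' ?_ (Eventually.of_forall fun z => ?_)
      · exact ((hvm.comp measurable_fst).mul
          ((hgf_m.comp measurable_snd).mul (hGmeas j))).aestronglyMeasurable
      · simp only [Function.uncurry]
        rw [Real.norm_eq_abs, abs_mul, abs_mul]
        refine mul_le_mul_of_nonneg_left ?_ (abs_nonneg _)
        rw [mul_comm K]
        exact mul_le_mul_of_nonneg_left (hGbd j z.1 z.2) (abs_nonneg _)
    calc ∫ θ, v θ * hfun j θ ∂P
        = ∫ θ, ∫ y, v θ * (gf y * Gnet P T σ w W j θ y) ∂ν₀ ∂P := by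
          refine integral_congr_ae (Eventually.of_forall fun θ => ?_)
          show v θ * hfun j θ = ∫ y, v θ * (gf y * Gnet P T σ w W j θ y) ∂ν₀
          rw [integral_const_mul]
      _ = ∫ y, ∫ θ, v θ * (gf y * Gnet P T σ w W j θ y) ∂P ∂ν₀ :=
          integral_integral_swap hswap
      _ = ∫ y, gf y * (∫ θ, v θ * Gnet P T σ w W j θ y ∂P) ∂ν₀ := by
          refine integral_congr_ae (Eventually.of_forall fun y => ?_)
          show ∫ θ, v θ * (gf y * Gnet P T σ w W j θ y) ∂P
              = gf y * ∫ θ, v θ * Gnet P T σ w W j θ y ∂P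
          rw [← integral_const_mul]
          refine integral_congr_ae (Eventually.of_forall fun θ => ?_)
          ring
  -- top layer vanishes
  have htop : ∀ᵐ θ ∂P, hfun L θ = 0 := by
    refine ae_zero_of_tests hR (hh_meas L) (K * ∫ y, |gf y| ∂ν₀) (hh_bd L) ?_
    intro v hvm hvb
    rw [fubini L v hvm (integrable_of_bdd hvm.aestronglyMeasurable R hvb)]
    -- the function y ↦ ∫ θ, v θ * G L θ y is in L²(ν₀)
    have hFvm : StronglyMeasurable (fun y => ∫ θ, v θ * Gnet P T σ w W L θ y ∂P) := by
      have : StronglyMeasurable (fun q : Θ × EuclideanSpace ℝ (Fin d) =>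
          v q.1 * Gnet P T σ w W L q.1 q.2) :=
        ((hvm.comp measurable_fst).mul (hGmeas L)).stronglyMeasurable
      have this' : StronglyMeasurable
          (Function.uncurry (fun θ y => v θ * Gnet P T σ w W L θ y)) := this
      exact this'.integral_prod_left
    have hFvb : ∀ y, |∫ θ, v θ * Gnet P T σ w W L θ y ∂P| ≤ R * K := by
      intro y
      calc |∫ θ, v θ * Gnet P T σ w W L θ y ∂P|
          ≤ ∫ θ, |v θ * Gnet P T σ w W L θ y| ∂P := by
            simpa only [Real.norm_eq_abs] using norm_integral_le_integral_norm
              (fun θ => v θ * Gnet P T σ w W L θ y) (μ := P)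
        _ ≤ ∫ _θ : Θ, R * K ∂P := by
            refine integral_mono ((hint_aG v (integrable_of_bdd hvm.aestronglyMeasurable R hvb)
              hvm.aestronglyMeasurable L y).abs) (integrable_const _) fun θ => ?_
            rw [abs_mul]
            exact mul_le_mul (hvb θ) (hGbd L θ y) (abs_nonneg _) hR.le
        _ = R * K := by simp
    have hFv2 : MemLp (fun y => ∫ θ, v θ * Gnet P T σ w W L θ y ∂P) 2 ν₀ :=
      memLp2_of_bdd hFvm.aestronglyMeasurable (R * K) hFvb
    have hmemM : (hFv2.toLp _) ∈ M :=
      ⟨v, memLp2_of_bdd hvm.aestronglyMeasurable R hvb, hFv2.coeFn_toLp⟩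
    have hinner := hg (hFv2.toLp _) hmemM
    rw [MeasureTheory.L2.inner_def] at hinner
    have hz : ∫ y, ((hFv2.toLp _ : Lp ℝ 2 ν₀) : EuclideanSpace ℝ (Fin d) → ℝ) y * gf y ∂ν₀ = 0 := by
      simpa [RCLike.inner_apply, mul_comm] using hinner
    calc ∫ y, gf y * (∫ θ, v θ * Gnet P T σ w W L θ y ∂P) ∂ν₀
        = ∫ y, ((hFv2.toLp _ : Lp ℝ 2 ν₀) : EuclideanSpace ℝ (Fin d) → ℝ) y * gf y ∂ν₀ := by
          refine integral_congr_ae ?_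
          filter_upwards [hFv2.coeFn_toLp] with y hy
          rw [hy]; ring
      _ = 0 := hz
  -- induction step
  have hstep : ∀ j : ℕ, (∀ᵐ θ ∂P, hfun (j+1) θ = 0) → ∀ᵐ θ ∂P, hfun j θ = 0 := by
    intro j hj1
    -- claim 1 : substitute arbitrary weights via diversity
    have claim1 : ∀ v : Θ → ℝ, Measurable v → (∀ θ, |v θ| ≤ R) →
        ∫ y, gf y * σ (∫ θ', v θ' * Gnet P T σ w W j θ' y ∂P) ∂ν₀ = 0 := by
      intro v hvm hvb
      have hpos : ∀ n : ℕ, ∃ θ₀ : Θ, hfun (j+1) θ₀ = 0 ∧ ‖w θ₀ - 0‖ < 1/((n:ℝ)+1) ∧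
          Real.sqrt (∫ θ', (W θ₀ θ' - v θ') ^ 2 ∂P) < 1/((n:ℝ)+1) := by
        intro n
        have hd := hdiv 0 (fun _ => 0) v measurable_const
          (fun _ => by simpa using hR.le) hvm hvb (1/((n:ℝ)+1)) (by positivity)
        by_contra hcon
        push_neg at hcon
        have hnull : P {θ | ¬ hfun (j+1) θ = 0} = 0 := ae_iff.mp hj1
        have hsub : {θ | ‖w θ - 0‖ < 1/((n:ℝ)+1) ∧
            Real.sqrt (∫ θ', (W θ' θ - (fun _ => (0:ℝ)) θ') ^ 2 ∂P) < 1/((n:ℝ)+1) ∧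
            Real.sqrt (∫ θ', (W θ θ' - v θ') ^ 2 ∂P) < 1/((n:ℝ)+1)}
            ⊆ {θ | ¬ hfun (j+1) θ = 0} := by
          intro θ₀ hθ₀ h0
          exact absurd hθ₀.2.2 (by simpa using hcon θ₀ h0 hθ₀.1)
        exact hd.ne' (le_antisymm ((measure_mono hsub).trans hnull.le) (zero_le))
      choose θseq hθ0 hθw hθW using hpos
      set B : EuclideanSpace ℝ (Fin d) → ℝ :=
        fun y => ∫ θ', v θ' * Gnet P T σ w W j θ' y ∂P with hB
      have hlim : Tendsto (fun n => hfun (j+1) (θseq n)) atTop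
          (𝓝 (∫ y, gf y * σ (B y) ∂ν₀)) := by
        refine tendsto_integral_of_dominated_convergence (fun y => K * |gf y|)
          (fun n => (hgf_m.mul (hGmy (j+1) (θseq n))).aestronglyMeasurable)
          (hgf_int.abs.const_mul K) (fun n => Eventually.of_forall fun y => ?_)
          (Eventually.of_forall fun y => ?_)
        · show ‖gf y * Gnet P T σ w W (j+1) (θseq n) y‖ ≤ K * |gf y|
          rw [Real.norm_eq_abs, abs_mul, mul_comm K]
          exact mul_le_mul_of_nonneg_left (hGbd (j+1) (θseq n) y) (abs_nonneg _)
        · -- pointwise convergence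
          have harg : Tendsto (fun n =>
              (∫ θ', W (θseq n) θ' * Gnet P T σ w W j θ' y ∂P) +
                (inner ℝ (w (θseq n)) (T^[j+1] y) : ℝ)) atTop (𝓝 (B y)) := by
            have h1 : Tendsto (fun n =>
                (∫ θ', W (θseq n) θ' * Gnet P T σ w W j θ' y ∂P) - B y) atTop (𝓝 0) := by
              refine squeeze_zero_norm (fun n => ?_)
                (by have h := (tendsto_one_div_add_atTop_nhds_zero_nat).const_mul K
                    rwa [mul_zero] at h)
              show ‖(∫ θ', W (θseq n) θ' * Gnet P T σ w W j θ' y ∂P) - B y‖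
                ≤ K * (1/((n:ℝ)+1))
              have hint1 : Integrable (fun θ' => W (θseq n) θ' * Gnet P T σ w W j θ' y) P :=
                hint_aG _ (integrable_of_bdd (hW.comp
                  (measurable_const.prodMk measurable_id)).aestronglyMeasurable R
                  (fun θ' => hWbdd _ θ'))
                  (hW.comp (measurable_const.prodMk measurable_id)).aestronglyMeasurable j y
              have hint2 : Integrable (fun θ' => v θ' * Gnet P T σ w W j θ' y) P :=
                hint_aG v (integrable_of_bdd hvm.aestronglyMeasurable R hvb)
                  hvm.aestronglyMeasurable j y
              have hdm : Measurable (fun θ' => W (θseq n) θ' - v θ') :=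
                (hW.comp (measurable_const.prodMk measurable_id)).sub hvm
              have hdb : ∀ θ', |W (θseq n) θ' - v θ'| ≤ 2 * R := by
                intro θ'
                calc |W (θseq n) θ' - v θ'| ≤ |W (θseq n) θ'| + |v θ'| := abs_sub _ _
                  _ ≤ R + R := add_le_add (hWbdd _ _) (hvb _)
                  _ = 2 * R := by ring
              have hBy : B y = ∫ θ', v θ' * Gnet P T σ w W j θ' y ∂P := rfl
              rw [Real.norm_eq_abs, hBy, ← integral_sub hint1 hint2]
              have he : ∀ θ', W (θseq n) θ' * Gnet P T σ w W j θ' y -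
                  v θ' * Gnet P T σ w W j θ' y =
                  (W (θseq n) θ' - v θ') * Gnet P T σ w W j θ' y := fun θ' => by ring
              calc |∫ θ', (W (θseq n) θ' * Gnet P T σ w W j θ' y -
                    v θ' * Gnet P T σ w W j θ' y) ∂P|
                  = |∫ θ', (W (θseq n) θ' - v θ') * Gnet P T σ w W j θ' y ∂P| := by
                    congr 1; exact integral_congr_ae (Eventually.of_forall he)
                _ ≤ ∫ θ', |(W (θseq n) θ' - v θ') * Gnet P T σ w W j θ' y| ∂P := by
                    simpa only [Real.norm_eq_abs] using norm_integral_le_integral_norm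
                      (fun θ' => (W (θseq n) θ' - v θ') * Gnet P T σ w W j θ' y) (μ := P)
                _ ≤ ∫ θ', |W (θseq n) θ' - v θ'| * K ∂P := by
                    refine integral_mono ((hint_aG _ (integrable_of_bdd
                      hdm.aestronglyMeasurable _ hdb) hdm.aestronglyMeasurable j y).abs)
                      (((integrable_of_bdd hdm.aestronglyMeasurable _ hdb).abs).mul_const K)
                      fun θ' => ?_
                    rw [abs_mul]
                    exact mul_le_mul_of_nonneg_left (hGbd j θ' y) (abs_nonneg _)
                _ = K * ∫ θ', |W (θseq n) θ' - v θ'| ∂P := by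
                    rw [← integral_const_mul]
                    refine integral_congr_ae (Eventually.of_forall fun θ' => ?_); ring
                _ ≤ K * Real.sqrt (∫ θ', (W (θseq n) θ' - v θ') ^ 2 ∂P) :=
                    mul_le_mul_of_nonneg_left (int_abs_le_sqrt hdm _ hdb) hK.le
                _ ≤ K * (1/((n:ℝ)+1)) :=
                    mul_le_mul_of_nonneg_left (hθW n).le hK.le
            have h2 : Tendsto (fun n => (inner ℝ (w (θseq n)) (T^[j+1] y) : ℝ)) atTop (𝓝 0) := by
              refine squeeze_zero_norm (fun n => ?_)
                (by have h := (tendsto_one_div_add_atTop_nhds_zero_nat).const_mul ‖T^[j+1] y‖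
                    rwa [mul_zero] at h)
              show ‖(inner ℝ (w (θseq n)) (T^[j+1] y) : ℝ)‖ ≤ ‖T^[j+1] y‖ * (1/((n:ℝ)+1))
              rw [Real.norm_eq_abs]
              calc |(inner ℝ (w (θseq n)) (T^[j+1] y) : ℝ)|
                  ≤ ‖w (θseq n)‖ * ‖T^[j+1] y‖ := abs_real_inner_le_norm _ _
                _ ≤ (1/((n:ℝ)+1)) * ‖T^[j+1] y‖ := by
                    refine mul_le_mul_of_nonneg_right ?_ (norm_nonneg _)
                    simpa using (hθw n).le
                _ = ‖T^[j+1] y‖ * (1/((n:ℝ)+1)) := by ring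
            have := h1.add h2
            simp only [sub_add_eq_add_sub] at this
            have h3 : Tendsto (fun n =>
                ((∫ θ', W (θseq n) θ' * Gnet P T σ w W j θ' y ∂P) +
                  (inner ℝ (w (θseq n)) (T^[j+1] y) : ℝ)) - B y) atTop (𝓝 (0 + 0)) := this
            have h4 := h3.add_const (B y)
            simpa using h4
          have hcomp := ((hσc.tendsto (B y)).comp harg).const_mul (gf y)
          exact hcomp
      have hconst : Tendsto (fun n => hfun (j+1) (θseq n)) atTop (𝓝 (0:ℝ)) := by
        have he : (fun n => hfun (j+1) (θseq n)) = fun _ => (0:ℝ) := funext hθ0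
        rw [he]; exact tendsto_const_nhds
      exact tendsto_nhds_unique hlim hconst
    -- claim 2 : linearization
    have claim2 : ∀ v : Θ → ℝ, Measurable v → (∀ θ, |v θ| ≤ R) →
        ∫ y, gf y * (∫ θ', v θ' * Gnet P T σ w W j θ' y ∂P) ∂ν₀ = 0 := by
      intro v hvm hvb
      set B : EuclideanSpace ℝ (Fin d) → ℝ :=
        fun y => ∫ θ', v θ' * Gnet P T σ w W j θ' y ∂P with hB
      have hBm : Measurable B := by
        have : StronglyMeasurable (fun q : Θ × EuclideanSpace ℝ (Fin d) =>
            v q.1 * Gnet P T σ w W j q.1 q.2) :=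
          ((hvm.comp measurable_fst).mul (hGmeas j)).stronglyMeasurable
        have this' : StronglyMeasurable
            (Function.uncurry (fun θ y => v θ * Gnet P T σ w W j θ y)) := this
        exact this'.integral_prod_left.measurable
      have hBb : ∀ y, |B y| ≤ R * K := by
        intro y
        calc |B y| ≤ ∫ θ', |v θ' * Gnet P T σ w W j θ' y| ∂P := by
              simpa only [Real.norm_eq_abs] using norm_integral_le_integral_norm
                (fun θ' => v θ' * Gnet P T σ w W j θ' y) (μ := P)
          _ ≤ ∫ _θ : Θ, R * K ∂P := by
              refine integral_mono ((hint_aG v (integrable_of_bdd hvm.aestronglyMeasurable R hvb)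
                hvm.aestronglyMeasurable j y).abs) (integrable_const _) fun θ' => ?_
              rw [abs_mul]
              exact mul_le_mul (hvb θ') (hGbd j θ' y) (abs_nonneg _) hR.le
          _ = R * K := by simp
      have hn : ∀ n : ℕ, ∫ y, gf y * (((n:ℝ)+1) * σ (B y / ((n:ℝ)+1))) ∂ν₀ = 0 := by
        intro n
        have hpos1 : (0:ℝ) < (n:ℝ)+1 := by positivity
        have hv' : Measurable (fun θ => v θ / ((n:ℝ)+1)) := hvm.div_const _
        have hv'b : ∀ θ, |v θ / ((n:ℝ)+1)| ≤ R := by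
          intro θ
          rw [abs_div, abs_of_pos hpos1]
          have h1 : |v θ| / ((n:ℝ)+1) ≤ |v θ| := by
            apply div_le_self (abs_nonneg _)
            have : (0:ℝ) ≤ (n:ℝ) := Nat.cast_nonneg n
            linarith
          exact h1.trans (hvb θ)
        have hc1 := claim1 _ hv' hv'b
        have hBdiv : ∀ y, (∫ θ', v θ' / ((n:ℝ)+1) * Gnet P T σ w W j θ' y ∂P)
            = B y / ((n:ℝ)+1) := by
          intro y
          have hBy : B y = ∫ θ', v θ' * Gnet P T σ w W j θ' y ∂P := rfl
          rw [hBy, ← integral_div]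
          refine integral_congr_ae (Eventually.of_forall fun θ' => ?_)
          ring
        simp only [hBdiv] at hc1
        have hc2 := congrArg (fun z => ((n:ℝ)+1) * z) hc1
        simp only [mul_zero] at hc2
        rw [← integral_const_mul] at hc2
        rw [← hc2]
        refine integral_congr_ae (Eventually.of_forall fun y => ?_)
        ring
      have hlim2 : Tendsto (fun n : ℕ => ∫ y, gf y * (((n:ℝ)+1) * σ (B y / ((n:ℝ)+1))) ∂ν₀)
          atTop (𝓝 (∫ y, gf y * (deriv σ 0 * B y) ∂ν₀)) := by
        refine tendsto_integral_of_dominated_convergence (fun y => (K*(R*K)) * |gf y|)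
          (fun n => (hgf_m.mul (measurable_const.mul
            (hσc.measurable.comp (hBm.div_const _)))).aestronglyMeasurable)
          (hgf_int.abs.const_mul _) (fun n => Eventually.of_forall fun y => ?_)
          (Eventually.of_forall fun y => ?_)
        · show ‖gf y * (((n:ℝ)+1) * σ (B y / ((n:ℝ)+1)))‖ ≤ K*(R*K) * |gf y|
          rw [Real.norm_eq_abs, abs_mul, mul_comm (K*(R*K))]
          refine mul_le_mul_of_nonneg_left ?_ (abs_nonneg _)
          have hpos1 : (0:ℝ) < (n:ℝ)+1 := by positivity
          have hlips : |σ (B y / ((n:ℝ)+1)) - σ 0| ≤ K * |B y / ((n:ℝ)+1) - 0| := by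
            have hd := hσlip.dist_le_mul (B y / ((n:ℝ)+1)) 0
            rwa [Real.dist_eq, Real.dist_eq, Real.coe_toNNReal K hK.le] at hd
          rw [hσ0, sub_zero, sub_zero] at hlips
          rw [abs_mul, abs_of_pos hpos1]
          calc ((n:ℝ)+1) * |σ (B y / ((n:ℝ)+1))| ≤ ((n:ℝ)+1) * (K * |B y / ((n:ℝ)+1)|) :=
              mul_le_mul_of_nonneg_left hlips hpos1.le
            _ = K * |B y| := by
                rw [abs_div, abs_of_pos hpos1]; field_simp
            _ ≤ K * (R * K) := mul_le_mul_of_nonneg_left (hBb y) hK.le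
        · exact (deriv_limit_aux σ hσdiff hσ0 (B y)).const_mul (gf y)
      have hz2 : ∫ y, gf y * (deriv σ 0 * B y) ∂ν₀ = 0 := by
        have hcz : Tendsto (fun n : ℕ => ∫ y, gf y * (((n:ℝ)+1) * σ (B y / ((n:ℝ)+1))) ∂ν₀)
            atTop (𝓝 (0:ℝ)) := by
          have he : (fun n : ℕ => ∫ y, gf y * (((n:ℝ)+1) * σ (B y / ((n:ℝ)+1))) ∂ν₀)
              = fun _ => (0:ℝ) := funext hn
          rw [he]; exact tendsto_const_nhds
        exact tendsto_nhds_unique hlim2 hcz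
      have hz3 : deriv σ 0 * ∫ y, gf y * B y ∂ν₀ = 0 := by
        rw [← integral_const_mul]
        rw [show (∫ y, deriv σ 0 * (gf y * B y) ∂ν₀)
            = ∫ y, gf y * (deriv σ 0 * B y) ∂ν₀ from
          integral_congr_ae (Eventually.of_forall fun y => by ring)]
        exact hz2
      rcases mul_eq_zero.mp hz3 with h' | h'
      · exact absurd h' hσ'0
      · exact h'
    refine ae_zero_of_tests hR (hh_meas j) (K * ∫ y, |gf y| ∂ν₀) (hh_bd j) ?_
    intro v hvm hvb
    rw [fubini j v hvm (integrable_of_bdd hvm.aestronglyMeasurable R hvb)]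
    exact claim2 v hvm hvb
  -- descend to the bottom layer
  have hdown : ∀ j : ℕ, (∀ᵐ θ ∂P, hfun j θ = 0) → ∀ᵐ θ ∂P, hfun 0 θ = 0 := by
    intro j
    induction j with
    | zero => exact id
    | succ j ih => exact fun hj => ih (hstep j hj)
  have h0 : ∀ᵐ θ ∂P, hfun 0 θ = 0 := hdown L htop
  -- base case : all single neurons annihilate gf
  have hbase : ∀ u : EuclideanSpace ℝ (Fin d), ∫ x, gf x * σ (inner ℝ u x) ∂ν₀ = 0 := by
    intro u
    have hpos : ∀ n : ℕ, ∃ θ₀ : Θ, hfun 0 θ₀ = 0 ∧ ‖w θ₀ - u‖ < 1/((n:ℝ)+1) := by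
      intro n
      have hd := hdiv u (fun _ => 0) (fun _ => 0) measurable_const
        (fun _ => by simpa using hR.le) measurable_const
        (fun _ => by simpa using hR.le) (1/((n:ℝ)+1)) (by positivity)
      by_contra hcon
      push_neg at hcon
      have hnull : P {θ | ¬ hfun 0 θ = 0} = 0 := ae_iff.mp h0
      have hsub : {θ | ‖w θ - u‖ < 1/((n:ℝ)+1) ∧
          Real.sqrt (∫ θ', (W θ' θ - (fun _ => (0:ℝ)) θ') ^ 2 ∂P) < 1/((n:ℝ)+1) ∧
          Real.sqrt (∫ θ', (W θ θ' - (fun _ => (0:ℝ)) θ') ^ 2 ∂P) < 1/((n:ℝ)+1)}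
          ⊆ {θ | ¬ hfun 0 θ = 0} := by
        intro θ₀ hθ₀ hh0
        exact absurd hθ₀.1 (by simpa using hcon θ₀ hh0)
      exact hd.ne' (le_antisymm ((measure_mono hsub).trans hnull.le) (zero_le))
    choose θseq hθ0 hθw using hpos
    have hlim : Tendsto (fun n => hfun 0 (θseq n)) atTop
        (𝓝 (∫ y, gf y * σ (inner ℝ u y) ∂ν₀)) := by
      refine tendsto_integral_of_dominated_convergence (fun y => K * |gf y|)
        (fun n => (hgf_m.mul (hGmy 0 (θseq n))).aestronglyMeasurable)
        (hgf_int.abs.const_mul K) (fun n => Eventually.of_forall fun y => ?_)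
        (Eventually.of_forall fun y => ?_)
      · show ‖gf y * Gnet P T σ w W 0 (θseq n) y‖ ≤ K * |gf y|
        rw [Real.norm_eq_abs, abs_mul, mul_comm K]
        exact mul_le_mul_of_nonneg_left (hGbd 0 (θseq n) y) (abs_nonneg _)
      · have harg : Tendsto (fun n => (inner ℝ (w (θseq n)) y : ℝ)) atTop (𝓝 (inner ℝ u y)) := by
          have h1 : Tendsto (fun n => (inner ℝ (w (θseq n) - u) y : ℝ)) atTop (𝓝 0) := by
            refine squeeze_zero_norm (fun n => ?_)
              (by have h := (tendsto_one_div_add_atTop_nhds_zero_nat).const_mul ‖y‖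
                  rwa [mul_zero] at h)
            show ‖(inner ℝ (w (θseq n) - u) y : ℝ)‖ ≤ ‖y‖ * (1/((n:ℝ)+1))
            rw [Real.norm_eq_abs]
            calc |(inner ℝ (w (θseq n) - u) y : ℝ)| ≤ ‖w (θseq n) - u‖ * ‖y‖ :=
                abs_real_inner_le_norm _ _
              _ ≤ (1/((n:ℝ)+1)) * ‖y‖ :=
                mul_le_mul_of_nonneg_right (hθw n).le (norm_nonneg _)
              _ = ‖y‖ * (1/((n:ℝ)+1)) := by ring
          have h2 := h1.add_const (inner ℝ u y : ℝ)
          simp only [inner_sub_left, sub_add_cancel, zero_add] at h2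
          exact h2
        exact ((hσc.tendsto (inner ℝ u y)).comp harg).const_mul (gf y)
    have hconst : Tendsto (fun n => hfun 0 (θseq n)) atTop (𝓝 (0:ℝ)) := by
      have he : (fun n => hfun 0 (θseq n)) = fun _ => (0:ℝ) := funext hθ0
      rw [he]; exact tendsto_const_nhds
    exact tendsto_nhds_unique hlim hconst
  have hzero : gf =ᵐ[ν₀] 0 := hUA gf hgf2 hbase
  exact Lp.eq_zero_iff_ae_eq_zero.mpr hzero
end

section
/- Let (X, d) be a metric space, F : X → X, and let a, b, c, T ≥ 0 and k > 0 be constants. Suppose that for every integer m ≥ 1 and all x, y ∈ X, d(F^{[m]}(x), F^{[m]}(y)) ≤ ((a(1+√m)T)^m / m!) · d(x, y) + c·exp(b(1+√m) − k·m). Then F has at most one fixed point, and for every x ∈ X the sequence of iterates (F^{[m]}(x))_{m ≥ 0} is a Cauchy sequence. -/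
open Real Finset

lemma natAux (m : ℕ) : m ^ (m - m/2) * (m/2).factorial ≤ 2 ^ (m - m/2) * m.factorial := by
  have h1 : (∏ i ∈ Ico 1 (m/2 + 1), i) * ∏ i ∈ Ico (m/2 + 1) (m + 1), i
      = ∏ i ∈ Ico 1 (m + 1), i := Finset.prod_Ico_consecutive _ (by omega) (by omega)
  rw [Finset.prod_Ico_id_eq_factorial, Finset.prod_Ico_id_eq_factorial] at h1
  have hcard : (Ico (m/2 + 1) (m + 1)).card = m - m/2 := by
    rw [Nat.card_Ico]; omega
  have h2 : m ^ (m - m/2) = ∏ _i ∈ Ico (m/2 + 1) (m + 1), m := by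
    rw [Finset.prod_const, hcard]
  have h3 : (∏ _i ∈ Ico (m/2 + 1) (m + 1), m) ≤ ∏ i ∈ Ico (m/2 + 1) (m + 1), 2 * i := by
    apply Finset.prod_le_prod'
    intro i hi
    rw [Finset.mem_Ico] at hi
    omega
  have h4 : (∏ i ∈ Ico (m/2 + 1) (m + 1), 2 * i)
      = 2 ^ (m - m/2) * ∏ i ∈ Ico (m/2 + 1) (m + 1), i := by
    rw [Finset.prod_mul_distrib, Finset.prod_const, hcard]
  calc m ^ (m - m/2) * (m/2).factorial
      ≤ (2 ^ (m - m/2) * ∏ i ∈ Ico (m/2 + 1) (m + 1), i) * (m/2).factorial := by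
        rw [h2]; exact Nat.mul_le_mul_right _ (h4 ▸ h3)
    _ = 2 ^ (m - m/2) * m.factorial := by
        rw [mul_assoc, mul_comm (∏ i ∈ Ico (m/2 + 1) (m + 1), i), h1]

lemma Cbound (A : ℝ) (hA : 0 ≤ A) (m : ℕ) :
    (A * (1 + Real.sqrt m)) ^ m / (Nat.factorial m : ℝ)
      ≤ (1 + 4*A) * ((4*A)^2) ^ (m/2) / ((m/2).factorial : ℝ) := by
  rcases Nat.eq_zero_or_pos m with hm | hm
  · subst hm; simp; nlinarith
  have hs1 : (1:ℝ) ≤ Real.sqrt m := by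
    rw [show (1:ℝ) = Real.sqrt 1 by simp]
    exact Real.sqrt_le_sqrt (by exact_mod_cast hm)
  have hs0 : (0:ℝ) ≤ Real.sqrt m := Real.sqrt_nonneg _
  -- work in multiplied form
  rw [div_le_div_iff₀ (by positivity) (by positivity)]
  set q := m - m/2 with hq
  have step1 : (A * (1 + Real.sqrt m)) ^ m ≤ (2*A) ^ m * Real.sqrt m ^ m := by
    rw [← mul_pow]
    apply pow_le_pow_left₀ (by positivity)
    nlinarith
  have step2 : Real.sqrt m ^ m ≤ (m:ℝ) ^ q := by
    calc Real.sqrt m ^ m ≤ Real.sqrt m ^ (2*q) := pow_le_pow_right₀ hs1 (by omega)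
      _ = (Real.sqrt m ^ 2) ^ q := by rw [← pow_mul]
      _ = (m:ℝ) ^ q := by rw [Real.sq_sqrt (by positivity)]
  have step3 : (m:ℝ) ^ q * ((m/2).factorial : ℝ) ≤ 2 ^ q * (m.factorial : ℝ) := by
    exact_mod_cast natAux m
  have step4 : (2*A) ^ m * (2:ℝ) ^ q ≤ (2*A) ^ m * 2 ^ m :=
    mul_le_mul_of_nonneg_left (pow_le_pow_right₀ one_le_two (by omega)) (by positivity)
  have step5 : (2*A) ^ m * (2:ℝ) ^ m = (4*A) ^ m := by
    rw [← mul_pow]; ring_nf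
  have step6 : (4*A) ^ m ≤ (1 + 4*A) * ((4*A)^2) ^ (m/2) := by
    have : (4*A) ^ m = ((4*A)^2) ^ (m/2) * (4*A) ^ (m % 2) := by
      rw [← pow_mul, ← pow_add]
      congr 1; omega
    rw [this, mul_comm]
    apply mul_le_mul_of_nonneg_right _ (by positivity)
    rcases Nat.mod_two_eq_zero_or_one m with h2 | h2 <;> rw [h2] <;> simp <;> nlinarith
  calc (A * (1 + Real.sqrt m)) ^ m * ((m/2).factorial : ℝ)
      ≤ (2*A) ^ m * Real.sqrt m ^ m * ((m/2).factorial : ℝ) := by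
        apply mul_le_mul_of_nonneg_right step1 (by positivity)
    _ ≤ (2*A) ^ m * ((m:ℝ) ^ q * ((m/2).factorial : ℝ)) := by
        rw [mul_assoc]
        exact mul_le_mul_of_nonneg_left
          (mul_le_mul_of_nonneg_right step2 (by positivity)) (by positivity)
    _ ≤ (2*A) ^ m * (2 ^ q * (m.factorial : ℝ)) :=
        mul_le_mul_of_nonneg_left step3 (by positivity)
    _ = (2*A) ^ m * 2 ^ q * (m.factorial : ℝ) := by ring
    _ ≤ (1 + 4*A) * ((4*A)^2) ^ (m/2) * (m.factorial : ℝ) := by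
        apply mul_le_mul_of_nonneg_right _ (by positivity)
        calc (2*A) ^ m * 2 ^ q ≤ (2*A) ^ m * 2 ^ m := step4
          _ = (4*A) ^ m := step5
          _ ≤ (1 + 4*A) * ((4*A)^2) ^ (m/2) := step6

lemma sumC (A : ℝ) : Summable (fun m : ℕ => (1 + 4*A) * ((4*A)^2) ^ (m/2) / ((m/2).factorial : ℝ)) := by
  have hg : Summable (fun j : ℕ => (1 + 4*A) * ((4*A)^2) ^ j / (j.factorial : ℝ)) := by
    simpa [mul_div_assoc] using (Real.summable_pow_div_factorial ((4*A)^2)).mul_left (1 + 4*A)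
  apply Summable.even_add_odd
  · simpa [Nat.mul_div_cancel_left] using hg
  · have : ∀ k : ℕ, (2 * k + 1) / 2 = k := fun k => by omega
    simpa [this] using hg

lemma tailBound (b c k : ℝ) (hb : 0 ≤ b) (hc : 0 ≤ c) (hk : 0 < k) (m : ℕ) :
    c * Real.exp (b * (1 + Real.sqrt m) - k * m)
      ≤ c * Real.exp (b + b^2/(2*k)) * Real.exp (-(k/2)) ^ m := by
  rw [← Real.exp_nat_mul, mul_assoc, ← Real.exp_add]
  apply mul_le_mul_of_nonneg_left _ hc
  apply Real.exp_le_exp.mpr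
  have hs0 : (0:ℝ) ≤ Real.sqrt m := Real.sqrt_nonneg _
  have hs2 : Real.sqrt m ^ 2 = (m:ℝ) := Real.sq_sqrt (by positivity)
  have key : b * Real.sqrt m ≤ b^2/(2*k) + (k/2) * m := by
    have hdiff : b^2/(2*k) + (k/2) * (m:ℝ) - b * Real.sqrt m
        = (b - k * Real.sqrt m)^2 / (2*k) := by
      field_simp; linear_combination (-(k^2)) * hs2
    have : (0:ℝ) ≤ (b - k * Real.sqrt m)^2 / (2*k) := by positivity
    linarith
  nlinarith

/-- If the iterates of `F : X → X` satisfy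
`d(F^[m] x, F^[m] y) ≤ ((a(1+√m)T)^m / m!) d(x,y) + c·exp(b(1+√m) − k·m)` for all `m ≥ 1`,
then `F` has at most one fixed point and every Picard iteration sequence is Cauchy. -/
theorem statement8 {X : Type*} [MetricSpace X] (F : X → X)
    (a b c T k : ℝ) (ha : 0 ≤ a) (hb : 0 ≤ b) (hc : 0 ≤ c) (hT : 0 ≤ T) (hk : 0 < k)
    (h : ∀ m : ℕ, 1 ≤ m → ∀ x y : X,
      dist (F^[m] x) (F^[m] y)
        ≤ (a * (1 + Real.sqrt m) * T) ^ m / (Nat.factorial m : ℝ) * dist x y +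
          c * Real.exp (b * (1 + Real.sqrt m) - k * m)) :
    (∀ x y : X, F x = x → F y = y → x = y) ∧
      ∀ x : X, CauchySeq (fun m : ℕ => F^[m] x) := by
  set A := a * T with hA
  have hA0 : 0 ≤ A := mul_nonneg ha hT
  set bndC : ℕ → ℝ := fun m => (1 + 4*A) * ((4*A)^2) ^ (m/2) / ((m/2).factorial : ℝ) with hbndC
  set tbnd : ℕ → ℝ := fun m => c * Real.exp (b + b^2/(2*k)) * Real.exp (-(k/2)) ^ m with htbnd
  have hCb : ∀ m : ℕ, (a * (1 + Real.sqrt m) * T) ^ m / (Nat.factorial m : ℝ) ≤ bndC m := by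
    intro m
    have := Cbound A hA0 m
    rw [show A * (1 + Real.sqrt m) = a * (1 + Real.sqrt m) * T by rw [hA]; ring] at this
    exact this
  have htb : ∀ m : ℕ, c * Real.exp (b * (1 + Real.sqrt m) - k * m) ≤ tbnd m :=
    tailBound b c k hb hc hk
  have hsumC : Summable bndC := sumC A
  have hsumT : Summable tbnd := by
    apply Summable.mul_left
    exact summable_geometric_of_lt_one (Real.exp_nonneg _)
      (Real.exp_lt_one_iff.mpr (by linarith))
  -- main bound lemma for arbitrary pair, m ≥ 1
  have main : ∀ m : ℕ, 1 ≤ m → ∀ x y : X,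
      dist (F^[m] x) (F^[m] y) ≤ bndC m * dist x y + tbnd m := by
    intro m hm x y
    calc dist (F^[m] x) (F^[m] y)
        ≤ (a * (1 + Real.sqrt m) * T) ^ m / (Nat.factorial m : ℝ) * dist x y +
          c * Real.exp (b * (1 + Real.sqrt m) - k * m) := h m hm x y
      _ ≤ bndC m * dist x y + tbnd m :=
        add_le_add (mul_le_mul_of_nonneg_right (hCb m) dist_nonneg) (htb m)
  have htb0 : ∀ m, 0 ≤ tbnd m := fun m => by
    simp only [htbnd]; positivity
  constructor
  · intro x y hx hy
    have hle : ∀ m : ℕ, 1 ≤ m → dist x y ≤ bndC m * dist x y + tbnd m := by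
      intro m hm
      have := main m hm x y
      rwa [Function.iterate_fixed hx, Function.iterate_fixed hy] at this
    have hsum : Summable (fun m => bndC m * dist x y + tbnd m) :=
      (hsumC.mul_right _).add hsumT
    have hten : Filter.Tendsto (fun m => bndC m * dist x y + tbnd m)
        Filter.atTop (nhds 0) := hsum.tendsto_atTop_zero
    have : dist x y ≤ 0 := by
      apply ge_of_tendsto hten
      filter_upwards [Filter.eventually_ge_atTop 1] with m hm using hle m hm
    exact dist_le_zero.mp this
  · intro x
    apply cauchySeq_of_dist_le_of_summable (fun m => bndC m * dist x (F x) + tbnd m)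
    · intro n
      rcases Nat.eq_zero_or_pos n with hn | hn
      · subst hn
        simp only [Function.iterate_zero, id_eq, Function.iterate_one]
        have h1 : (1:ℝ) ≤ bndC 0 := by
          simp only [hbndC]; simp; nlinarith
        have := htb0 0
        nlinarith [(dist_nonneg : (0:ℝ) ≤ dist x (F x))]
      · have := main n hn x (F x)
        rwa [← Function.iterate_succ_apply] at this
    · exact (hsumC.mul_right _).add hsumT
end
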